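/- arXiv:2405.03856 — 4 statements merged into one kernel-verified Lean document; each statement's English description precedes it below -/
import Mathlib

section
/- Every cubic multigraph with at most two bridges contains a perfect matching. -/
/-- A multigraph on vertex type `V` with edge type `E`: each edge has an
unordered pair of endpoints (loops and parallel edges are allowed). -/
structure Multigraph (V : Type) (E : Type) where
  ends : E → Sym2 V

namespace Multigraph

variable {V E : Type} (G : Multigraph V E)

/-- A single step along an edge of the edge set `ES`. -/
def Step (ES : Set E) (x y : V) : Prop := ∃ e ∈ ES, G.ends e = s(x, y)

/-- `x` and `y` are joined by a walk using only edges of `ES`. -/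
def LinkedOn (ES : Set E) (x y : V) : Prop := Relation.ReflTransGen (G.Step ES) x y

/-- All edges of `ES` have both endpoints in `VS`. -/
def EdgesWithin (VS : Set V) (ES : Set E) : Prop := ∀ e ∈ ES, ∀ x ∈ G.ends e, x ∈ VS

/-- The subgraph with vertex set `VS` and edge set `ES` is connected. -/
def ConnectedOn (VS : Set V) (ES : Set E) : Prop :=
  G.EdgesWithin VS ES ∧ ∀ x ∈ VS, ∀ y ∈ VS, G.LinkedOn ES x y

/-- The degree of `v` in the edge set `ES`; a loop at `v` counts twice. -/
noncomputable def degOn (ES : Set E) (v : V) : ℕ :=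
  {e ∈ ES | v ∈ G.ends e}.ncard + {e ∈ ES | G.ends e = s(v, v)}.ncard

/-- The subgraph `(VS, ES)` is cubic: every vertex has degree exactly `3`. -/
def CubicOn (VS : Set V) (ES : Set E) : Prop :=
  G.EdgesWithin VS ES ∧ ∀ v ∈ VS, G.degOn ES v = 3

/-- `f` is a bridge of the subgraph `(VS, ES)`: removing it disconnects two
vertices of `VS` that were connected. -/
def IsBridgeOn (VS : Set V) (ES : Set E) (f : E) : Prop :=
  f ∈ ES ∧ ∃ x ∈ VS, ∃ y ∈ VS, G.LinkedOn ES x y ∧ ¬ G.LinkedOn (ES \ {f}) x y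

/-- The subgraph `(VS, ES)` has no bridge. -/
def BridgelessOn (VS : Set V) (ES : Set E) : Prop := ∀ f, ¬ G.IsBridgeOn VS ES f

/-- `M` is a perfect matching of the subgraph `(VS, ES)`: a set of non-loop
edges such that every vertex of `VS` is incident to exactly one edge of `M`. -/
def IsPerfectMatchingOn (VS : Set V) (ES : Set E) (M : Set E) : Prop :=
  M ⊆ ES ∧ (∀ e ∈ M, ¬ (G.ends e).IsDiag) ∧ ∀ v ∈ VS, ∃! e, e ∈ M ∧ v ∈ G.ends e

/-- `T` is a spanning tree of the subgraph `(VS, ES)`: it is a connected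
spanning subgraph in which every edge is essential (i.e. it is acyclic). -/
def IsSpanningTreeOn (VS : Set V) (ES : Set E) (T : Set E) : Prop :=
  T ⊆ ES ∧ G.ConnectedOn VS T ∧ ∀ f ∈ T, ¬ G.ConnectedOn VS (T \ {f})

/-- The non-tree edge `e` covers the tree edge `f` of the spanning tree `T`:
`f` lies on the path in `T` connecting the endpoints of `e`, i.e. the
endpoints of `e` get disconnected in `T` after removing `f`. -/
def Covers (T : Set E) (e f : E) : Prop :=
  f ∈ T ∧ e ∉ T ∧ ∃ x y, G.ends e = s(x, y) ∧ ¬ G.LinkedOn (T \ {f}) x y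

/-- `A` is an `M`-alternating cycle: a nonempty connected set of non-loop
edges in which every vertex incident to `A` is incident to exactly one edge
of `A ∩ M` and exactly one edge of `A \ M`. -/
def IsAlternatingCycle (M A : Set E) : Prop :=
  A.Nonempty ∧
  (∀ e ∈ A, ¬ (G.ends e).IsDiag) ∧
  (∀ v, (∃ e ∈ A, v ∈ G.ends e) →
    (∃! e, e ∈ A ∩ M ∧ v ∈ G.ends e) ∧ (∃! e, e ∈ A \ M ∧ v ∈ G.ends e)) ∧
  (∀ x y, (∃ e ∈ A, x ∈ G.ends e) → (∃ e ∈ A, y ∈ G.ends e) → G.LinkedOn A x y)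

end Multigraph

namespace Multigraph

set_option linter.unusedSectionVars false

open scoped Classical

variable {V E : Type} (G : Multigraph V E)

/-- Edges of `ES` avoiding the vertex set `T`. -/
def avoidE (ES : Set E) (T : Set V) : Set E := {e ∈ ES | ∀ x ∈ G.ends e, x ∉ T}

/-- Edges of `ES` lying within `X`. -/
def withinE (ES : Set E) (X : Set V) : Set E := {e ∈ ES | ∀ x ∈ G.ends e, x ∈ X}

/-- The connected component of `x` w.r.t. edge set `ES`. -/
def comp (ES : Set E) (x : V) : Set V := {y | G.LinkedOn ES x y}

def compsIn (VS : Set V) (ES : Set E) : Set (Set V) := (G.comp ES) '' VS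

def oddComps (VS : Set V) (ES : Set E) : Set (Set V) :=
  {C ∈ G.compsIn VS ES | Odd C.ncard}

def TutteCond (VS : Set V) (ES : Set E) : Prop :=
  ∀ T ⊆ VS, (G.oddComps (VS \ T) (G.avoidE ES T)).ncard ≤ T.ncard

variable {G} {ES ES₁ ES₂ M : Set E} {VS X T W S : Set V} {x y z v : V} {e : E}

lemma avoidE_subset : G.avoidE ES T ⊆ ES := fun _ h => h.1

lemma withinE_subset : G.withinE ES X ⊆ ES := fun _ h => h.1

lemma avoidE_avoidE : G.avoidE (G.avoidE ES S) T = G.avoidE ES (S ∪ T) := by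
  ext e; simp only [avoidE, Set.mem_setOf_eq, Set.mem_union]
  constructor
  · rintro ⟨⟨h1, h2⟩, h3⟩
    exact ⟨h1, fun x hx => by push_neg; exact ⟨h2 x hx, h3 x hx⟩⟩
  · rintro ⟨h1, h2⟩
    exact ⟨⟨h1, fun x hx hS => h2 x hx (Or.inl hS)⟩, fun x hx hT => h2 x hx (Or.inr hT)⟩

lemma Step.symm (h : G.Step ES x y) : G.Step ES y x := by
  obtain ⟨e, he, hends⟩ := h
  exact ⟨e, he, by rw [hends, Sym2.eq_swap]⟩

lemma LinkedOn.symm (h : G.LinkedOn ES x y) : G.LinkedOn ES y x :=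
  (@Relation.ReflTransGen.stdSymm _ _ ⟨fun _ _ hs => Step.symm hs⟩).symm _ _ h

lemma LinkedOn.rfl : G.LinkedOn ES x x := Relation.ReflTransGen.refl

lemma LinkedOn.trans (h : G.LinkedOn ES x y) (h' : G.LinkedOn ES y z) :
    G.LinkedOn ES x z := Relation.ReflTransGen.trans h h'

lemma Step.mono (h : ES₁ ⊆ ES₂) (hs : G.Step ES₁ x y) : G.Step ES₂ x y := by
  obtain ⟨e, he, hends⟩ := hs; exact ⟨e, h he, hends⟩

lemma LinkedOn.mono (h : ES₁ ⊆ ES₂) (hl : G.LinkedOn ES₁ x y) : G.LinkedOn ES₂ x y :=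
  Relation.ReflTransGen.mono (fun _ _ hs => Step.mono h hs) _ _ hl

lemma mem_comp_self : x ∈ G.comp ES x := Relation.ReflTransGen.refl

lemma comp_mono (h : ES₁ ⊆ ES₂) : G.comp ES₁ x ⊆ G.comp ES₂ x :=
  fun _ hy => LinkedOn.mono h hy

lemma mem_comp_comm (h : y ∈ G.comp ES x) : x ∈ G.comp ES y := LinkedOn.symm h

lemma comp_eq_of_mem (h : y ∈ G.comp ES x) : G.comp ES y = G.comp ES x := by
  ext z
  exact ⟨fun hz => LinkedOn.trans h hz, fun hz => LinkedOn.trans (LinkedOn.symm h) hz⟩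

lemma ends_eq_of_mem (hy : y ∈ G.ends e) (hz : z ∈ G.ends e)
    (hne : y ≠ z) : G.ends e = s(y, z) := by
  induction' h : (G.ends e) using Sym2.inductionOn with a b
  rw [h, Sym2.mem_iff] at hy hz
  rcases hy with rfl | rfl <;> rcases hz with rfl | rfl <;>
    simp_all [Sym2.eq_swap]

lemma step_of_mem_ends (he : e ∈ ES) (hy : y ∈ G.ends e) (hz : z ∈ G.ends e)
    (hne : y ≠ z) : G.Step ES y z :=
  ⟨e, he, ends_eq_of_mem hy hz hne⟩

lemma comp_closed (h : y ∈ G.comp ES x) (he : e ∈ ES) (hy : y ∈ G.ends e) :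
    ∀ z ∈ G.ends e, z ∈ G.comp ES x := by
  intro z hz
  rcases eq_or_ne y z with rfl | hne
  · exact h
  · exact LinkedOn.trans h (Relation.ReflTransGen.single (step_of_mem_ends he hy hz hne))

lemma comps_eq_or_disjoint {C₁ C₂ : Set V} (h₁ : C₁ ∈ G.compsIn VS ES)
    (h₂ : C₂ ∈ G.compsIn VS ES) : C₁ = C₂ ∨ Disjoint C₁ C₂ := by
  obtain ⟨a, _, rfl⟩ := h₁
  obtain ⟨b, _, rfl⟩ := h₂
  by_cases h : (G.comp ES a ∩ G.comp ES b).Nonempty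
  · obtain ⟨c, hca, hcb⟩ := h
    left; rw [← comp_eq_of_mem hca, comp_eq_of_mem hcb]
  · right; exact Set.disjoint_iff_inter_eq_empty.2 (Set.not_nonempty_iff_eq_empty.1 h)

lemma comp_nonempty {C : Set V} (h : C ∈ G.compsIn VS ES) : C.Nonempty := by
  obtain ⟨a, _, rfl⟩ := h; exact ⟨a, mem_comp_self⟩

/-- Components do not change when we restrict to an edge subset that keeps
all edges touching the component. -/
lemma comp_subset_comp (h12 : ES₁ ⊆ ES₂)
    (hcl : ∀ e ∈ ES₂, (∃ z ∈ G.ends e, z ∈ G.comp ES₁ x) → e ∈ ES₁) :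
    G.comp ES₂ x = G.comp ES₁ x := by
  apply Set.Subset.antisymm _ (comp_mono h12)
  intro y hy
  induction hy with
  | refl => exact mem_comp_self
  | tail hb hstep ih =>
    obtain ⟨e, he, hends⟩ := hstep
    refine LinkedOn.trans ih (Relation.ReflTransGen.single
      ⟨e, hcl e he ⟨_, ?_, ih⟩, hends⟩)
    rw [hends]; exact Sym2.mem_mk_left _ _

/-- Vertices of `comp (avoidE ES W) y` avoid `W` (provided `y ∉ W`). -/
lemma comp_avoidE_disjoint (hy : y ∉ W) : Disjoint (G.comp (G.avoidE ES W) y) W := by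
  rw [Set.disjoint_left]
  intro z hz
  induction hz with
  | refl => exact hy
  | tail hb hstep ih =>
    obtain ⟨e, he, hends⟩ := hstep
    exact he.2 _ (by rw [hends]; exact Sym2.mem_mk_right _ _)

lemma comp_subset_of_edgesWithin (hE : G.EdgesWithin VS ES) (hx : x ∈ VS) :
    G.comp ES x ⊆ VS := by
  intro y hy
  induction hy with
  | refl => exact hx
  | tail hb hstep ih =>
    obtain ⟨e, he, hends⟩ := hstep
    exact hE e he _ (by rw [hends]; exact Sym2.mem_mk_right _ _)

lemma sUnion_compsIn (hE : ∀ x ∈ VS, G.comp ES x ⊆ VS) :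
    ⋃₀ (G.compsIn VS ES) = VS := by
  apply Set.Subset.antisymm
  · rintro y ⟨C, ⟨a, ha, rfl⟩, hy⟩
    exact hE a ha hy
  · intro x hx
    exact ⟨G.comp ES x, ⟨x, hx, rfl⟩, mem_comp_self⟩

lemma zmod2_natCast (n : ℕ) : (n : ZMod 2) = if Odd n then 1 else 0 := by
  rw [← ZMod.natCast_mod]
  rcases Nat.even_or_odd n with h | h
  · rw [Nat.even_iff.mp h]; simp [Nat.not_odd_iff_even.mpr h]
  · rw [Nat.odd_iff.mp h]; simp [h]

lemma le_of_le_succ_of_parity {a b : ℕ} (h : a ≤ b + 1) (hp : (a : ZMod 2) = (b : ZMod 2)) :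
    a ≤ b := by
  by_contra hc
  have ha : a = b + 1 := by omega
  subst ha
  push_cast at hp
  rw [add_comm] at hp
  nth_rewrite 2 [← zero_add (b : ZMod 2)] at hp
  exact one_ne_zero (add_right_cancel hp)

variable [Fintype V] [Fintype E]

lemma ncard_eq_sum_comps (hcl : ∀ x ∈ X, G.comp ES x ⊆ X) :
    X.ncard = ∑ C ∈ (G.compsIn X ES).toFinset, C.ncard := by
  have hXU : X.toFinset = (G.compsIn X ES).toFinset.biUnion (fun C => C.toFinset) := by
    ext y
    simp only [Finset.mem_biUnion, Set.mem_toFinset]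
    constructor
    · intro hy; exact ⟨G.comp ES y, ⟨y, hy, rfl⟩, mem_comp_self⟩
    · rintro ⟨C, ⟨a, ha, rfl⟩, hyC⟩
      exact hcl a ha hyC
  have hdisj : ∀ C ∈ (G.compsIn X ES).toFinset, ∀ D ∈ (G.compsIn X ES).toFinset,
      C ≠ D → Disjoint C.toFinset D.toFinset := by
    intro C hC D hD hne
    simp only [Set.mem_toFinset] at hC hD
    rcases comps_eq_or_disjoint hC hD with rfl | hd
    · exact absurd rfl hne
    · exact Set.disjoint_toFinset.mpr hd
  rw [Set.ncard_eq_toFinset_card', hXU, Finset.card_biUnion hdisj]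
  exact Finset.sum_congr rfl (fun C _ => (Set.ncard_eq_toFinset_card' C).symm)

lemma oddComps_parity (hcl : ∀ x ∈ X, G.comp ES x ⊆ X) :
    ((G.oddComps X ES).ncard : ZMod 2) = (X.ncard : ZMod 2) := by
  have hodd : (G.oddComps X ES).toFinset
      = (G.compsIn X ES).toFinset.filter (fun C => Odd C.ncard) := by
    ext C
    simp only [Set.mem_toFinset, Finset.mem_filter]
    exact Iff.rfl
  rw [ncard_eq_sum_comps hcl, Set.ncard_eq_toFinset_card', hodd]
  push_cast
  rw [Finset.sum_congr rfl (fun C _ => zmod2_natCast C.ncard), Finset.sum_boole]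

lemma avoidE_edgesWithin (hE : G.EdgesWithin VS ES) :
    G.EdgesWithin (VS \ T) (G.avoidE ES T) :=
  fun e he x hx => ⟨hE e he.1 x hx, he.2 x hx⟩

lemma key_count (hE : G.EdgesWithin VS ES) {x0 : V} (hx0 : x0 ∈ VS \ S) {W : Set V}
    (hW : W ⊆ G.comp (G.avoidE ES S) x0) :
    (G.oddComps (VS \ S) (G.avoidE ES S) \ {G.comp (G.avoidE ES S) x0}).ncard
      + (G.oddComps (G.comp (G.avoidE ES S) x0 \ W) (G.avoidE ES (S ∪ W))).ncard
      ≤ (G.oddComps (VS \ (S ∪ W)) (G.avoidE ES (S ∪ W))).ncard := by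
  set ES₂ := G.avoidE ES S with hES₂
  set ES₁ := G.avoidE ES (S ∪ W) with hES₁
  set C := G.comp ES₂ x0 with hC
  have h12 : ES₁ ⊆ ES₂ := fun e he => ⟨he.1, fun x hx hx' => he.2 x hx (Or.inl hx')⟩
  have hCcomps : C ∈ G.compsIn (VS \ S) ES₂ := ⟨x0, hx0, rfl⟩
  have hCVS : C ⊆ VS \ S := comp_subset_of_edgesWithin (avoidE_edgesWithin hE) hx0
  have hA : ∀ C' ∈ G.oddComps (VS \ S) ES₂ \ {C},
      C' ∈ G.oddComps (VS \ (S ∪ W)) ES₁ := by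
    rintro C' ⟨⟨⟨a, ha, rfl⟩, hodd⟩, hne⟩
    have hmem : G.comp ES₂ a ∈ G.compsIn (VS \ S) ES₂ := ⟨a, ha, rfl⟩
    have hdisj : Disjoint (G.comp ES₂ a) C := by
      rcases comps_eq_or_disjoint hmem hCcomps with heq | h
      · exact absurd heq (by simpa using hne)
      · exact h
    have hcomp : G.comp ES₂ a = G.comp ES₁ a := by
      apply comp_subset_comp h12
      rintro e he ⟨z, hz, hzc⟩
      refine ⟨he.1, fun x hx => ?_⟩
      rintro (hxS | hxW)
      · exact he.2 x hx hxS
      · exact Set.disjoint_left.mp hdisj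
          (comp_closed (LinkedOn.mono h12 hzc) he hz x hx) (hW hxW)
    have haW : a ∉ W := fun haW =>
      Set.disjoint_left.mp hdisj mem_comp_self (hW haW)
    exact ⟨⟨a, ⟨ha.1, fun h' => h'.elim ha.2 haW⟩, hcomp.symm⟩, hodd⟩
  have hB : ∀ D ∈ G.oddComps (C \ W) ES₁, D ∈ G.oddComps (VS \ (S ∪ W)) ES₁ := by
    rintro D ⟨⟨y, hy, rfl⟩, hodd⟩
    have hyVS : y ∈ VS \ S := hCVS hy.1
    exact ⟨⟨y, ⟨hyVS.1, fun h' => h'.elim hyVS.2 hy.2⟩, rfl⟩, hodd⟩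
  have hBsub : ∀ D ∈ G.oddComps (C \ W) ES₁, D ⊆ C ∧ D.Nonempty := by
    rintro D ⟨⟨y, hy, rfl⟩, hodd⟩
    refine ⟨?_, ⟨y, mem_comp_self⟩⟩
    rw [hC, ← comp_eq_of_mem hy.1]
    exact comp_mono h12
  have hABdisj : Disjoint (G.oddComps (VS \ S) ES₂ \ {C}) (G.oddComps (C \ W) ES₁) := by
    rw [Set.disjoint_left]
    rintro D ⟨⟨hDc, hDodd⟩, hne⟩ hD
    obtain ⟨hDC, hDne⟩ := hBsub D hD
    have hdisj : Disjoint D C := by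
      rcases comps_eq_or_disjoint hDc hCcomps with heq | h
      · exact absurd heq (by simpa using hne)
      · exact h
    obtain ⟨d, hd⟩ := hDne
    exact Set.disjoint_left.mp hdisj hd (hDC hd)
  calc (G.oddComps (VS \ S) ES₂ \ {C}).ncard + (G.oddComps (C \ W) ES₁).ncard
      = ((G.oddComps (VS \ S) ES₂ \ {C}) ∪ G.oddComps (C \ W) ES₁).ncard := by
        rw [Set.ncard_union_eq hABdisj (Set.toFinite _) (Set.toFinite _)]
    _ ≤ _ := by
        apply Set.ncard_le_ncard _ (Set.toFinite _)
        intro D hD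
        rcases hD with hD | hD
        · exact hA D hD
        · exact hB D hD

theorem tutte_aux (n : ℕ) : ∀ (VS : Set V) (ES : Set E), VS.ncard ≤ n →
    G.EdgesWithin VS ES → G.TutteCond VS ES →
    ∃ M, G.IsPerfectMatchingOn VS ES M := by
  induction n with
  | zero =>
    intro VS ES hcard hE hT
    have hVS : VS = ∅ := by
      rw [← Set.ncard_eq_zero (Set.toFinite VS)]; omega
    subst hVS
    exact ⟨∅, Set.empty_subset _, fun e he => absurd he (Set.notMem_empty e),
      fun v hv => absurd hv (Set.notMem_empty v)⟩
  | succ n ih =>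
    intro VS ES hcard hE hT
    rcases eq_or_ne VS ∅ with rfl | hVSne
    · exact ⟨∅, Set.empty_subset _, fun e he => absurd he (Set.notMem_empty e),
        fun v hv => absurd hv (Set.notMem_empty v)⟩
    set tight : Set (Set V) :=
      {T | T ⊆ VS ∧ (G.oddComps (VS \ T) (G.avoidE ES T)).ncard = T.ncard} with htightdef
    have hemptyT : ∅ ∈ tight := by
      refine ⟨Set.empty_subset _, ?_⟩
      have h0 := hT ∅ (Set.empty_subset _)
      simp only [Set.ncard_empty, Nat.le_zero] at h0
      simpa using h0
    obtain ⟨S, hS, hSmax⟩ :=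
      Set.Finite.exists_maximalFor Set.ncard tight (Set.toFinite _) ⟨∅, hemptyT⟩
    obtain ⟨hSVS, htight⟩ := hS
    have hEW : G.EdgesWithin (VS \ S) (G.avoidE ES S) := avoidE_edgesWithin hE
    have hmax : ∀ W : Set V, W ⊆ VS → S.ncard < W.ncard →
        (G.oddComps (VS \ W) (G.avoidE ES W)).ncard ≠ W.ncard := by
      intro W hWVS hlt heq
      have := hSmax ⟨hWVS, heq⟩ (le_of_lt hlt)
      omega
    have claim1 : ∀ C ∈ G.compsIn (VS \ S) (G.avoidE ES S), Odd C.ncard := by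
      rintro C ⟨a, ha, rfl⟩
      by_contra heven
      have hkey := key_count (S := S) hE ha (W := {a})
        (by simpa using (mem_comp_self : a ∈ G.comp (G.avoidE ES S) a))
      have h1 : (G.oddComps (VS \ S) (G.avoidE ES S) \ {G.comp (G.avoidE ES S) a}).ncard
          = S.ncard := by
        rw [Set.diff_singleton_eq_self, htight]
        rintro ⟨_, hodd⟩
        exact heven hodd
      have hanotS : a ∉ S ∪ {a} → False := by simp
      have hcl : ∀ y ∈ G.comp (G.avoidE ES S) a \ {a},
          G.comp (G.avoidE ES (S ∪ {a})) y ⊆ G.comp (G.avoidE ES S) a \ {a} := by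
        intro y hy z hz
        have hyS : y ∉ S ∪ {a} := by
          intro h
          rcases h with hS | h1
          · exact ((comp_subset_of_edgesWithin hEW ha) hy.1).2 hS
          · exact hy.2 h1
        constructor
        · have : G.comp (G.avoidE ES (S ∪ {a})) y ⊆ G.comp (G.avoidE ES S) y :=
            comp_mono (fun e he => ⟨he.1, fun x hx hxS => he.2 x hx (Or.inl hxS)⟩)
          rw [comp_eq_of_mem hy.1] at this
          exact this hz
        · intro hza
          exact Set.disjoint_left.mp (comp_avoidE_disjoint hyS) hz (Set.mem_union_right _ hza)
      have hparity := oddComps_parity (G := G) hcl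
      rw [ZMod.natCast_eq_natCast_iff] at hparity
      have hXcard : (G.comp (G.avoidE ES S) a \ {a}).ncard
          = (G.comp (G.avoidE ES S) a).ncard - 1 :=
        Set.ncard_diff_singleton_of_mem mem_comp_self
      have hCpos : 1 ≤ (G.comp (G.avoidE ES S) a).ncard := by
        have h1' : (G.comp (G.avoidE ES S) a).ncard ≠ 0 := by
          intro h
          rw [Set.ncard_eq_zero (Set.toFinite _)] at h
          exact absurd (h ▸ (mem_comp_self : a ∈ G.comp (G.avoidE ES S) a))
            (Set.notMem_empty _)
        omega
      have hCeven : (G.comp (G.avoidE ES S) a).ncard % 2 = 0 := by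
        rw [Nat.odd_iff] at heven; omega
      have hcnt : 1 ≤ (G.oddComps (G.comp (G.avoidE ES S) a \ {a})
          (G.avoidE ES (S ∪ {a}))).ncard := by
        have := hparity
        unfold Nat.ModEq at this
        omega
      have hTut := hT (S ∪ {a}) (by
        rw [Set.union_subset_iff]
        exact ⟨hSVS, by simpa using ha.1⟩)
      have hScard : (S ∪ {a}).ncard = S.ncard + 1 := by
        rw [Set.union_singleton, Set.ncard_insert_of_notMem ha.2 (Set.toFinite _)]
      exact hmax (S ∪ {a}) (by rw [Set.union_subset_iff]; exact ⟨hSVS, by simpa using ha.1⟩)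
        (by omega) (by omega)
    have hcompsodd : G.oddComps (VS \ S) (G.avoidE ES S) = G.compsIn (VS \ S) (G.avoidE ES S) := by
      apply Set.Subset.antisymm (Set.sep_subset _ _)
      intro C hC; exact ⟨hC, claim1 C hC⟩
    have hcompscard : (G.compsIn (VS \ S) (G.avoidE ES S)).ncard = S.ncard := by
      rw [← hcompsodd]; exact htight
    have hVSS : (VS \ S).Nonempty := by
      rcases Set.eq_empty_or_nonempty (VS \ S) with h | h
      · exfalso
        have hSeq : S = VS := Set.Subset.antisymm hSVS (Set.diff_eq_empty.mp h)
        have : G.compsIn (VS \ S) (G.avoidE ES S) = ∅ := by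
          rw [compsIn, h, Set.image_empty]
        rw [this, Set.ncard_empty] at hcompscard
        exact hVSne (by rw [← hSeq, ← Set.ncard_eq_zero (Set.toFinite S), hcompscard])
      · exact h
    have hSne : 1 ≤ S.ncard := by
      obtain ⟨x, hx⟩ := hVSS
      have : G.comp (G.avoidE ES S) x ∈ G.compsIn (VS \ S) (G.avoidE ES S) := ⟨x, hx, rfl⟩
      have h1 : (G.compsIn (VS \ S) (G.avoidE ES S)).ncard ≠ 0 := by
        intro h
        rw [Set.ncard_eq_zero (Set.toFinite _)] at h
        exact absurd (h ▸ this) (Set.notMem_empty _)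
      omega
    haveI : Fintype ↥(G.compsIn (VS \ S) (G.avoidE ES S)) := Fintype.ofFinite _
    set N : ↥(G.compsIn (VS \ S) (G.avoidE ES S)) → Set V :=
      fun C => {s ∈ S | ∃ e ∈ ES, ∃ x ∈ (C : Set V), G.ends e = s(x, s)} with hN
    set t : ↥(G.compsIn (VS \ S) (G.avoidE ES S)) → Finset V := fun C => (N C).toFinset with htdef
    have hall : ∀ A : Finset ↥(G.compsIn (VS \ S) (G.avoidE ES S)), A.card ≤ (A.biUnion t).card := by
      intro A
      set S₀ : Set V := ↑(A.biUnion t) with hS₀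
      have hS₀S : S₀ ⊆ S := by
        intro s hs
        rw [hS₀] at hs
        simp only [Finset.coe_biUnion, Set.mem_iUnion, Finset.mem_coe] at hs
        obtain ⟨C, hC, hsC⟩ := hs
        have : s ∈ N C := by
          rw [htdef] at hsC; rwa [Set.mem_toFinset] at hsC
        exact this.1
      have hCsub' : ∀ C : ↥(G.compsIn (VS \ S) (G.avoidE ES S)), (C : Set V) ⊆ VS \ S := by
        intro C
        obtain ⟨a, ha, heq⟩ := C.2
        rw [← heq]
        exact comp_subset_of_edgesWithin hEW ha
      have hmem : ∀ C ∈ A, (C : Set V) ∈ G.oddComps (VS \ S₀) (G.avoidE ES S₀) := by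
        intro C hCA
        obtain ⟨a, ha, heq⟩ := C.2
        have h12 : (G.avoidE ES S) ⊆ G.avoidE ES S₀ :=
          fun e he => ⟨he.1, fun x hx hxS => he.2 x hx (hS₀S hxS)⟩
        have hcomp : G.comp (G.avoidE ES S₀) a = G.comp (G.avoidE ES S) a := by
          apply comp_subset_comp h12
          rintro e he ⟨z, hz, hzc⟩
          refine ⟨he.1, fun x hx hxS => ?_⟩
          have hzC : z ∈ (C : Set V) := by rw [← heq]; exact hzc
          have hzx : z ≠ x := fun h => ((hCsub' C hzC).2) (h ▸ hxS)
          have hxN : x ∈ N C := ⟨hxS, e, he.1, z, hzC, ends_eq_of_mem hz hx hzx⟩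
          have hxS₀ : x ∈ S₀ := by
            rw [hS₀]
            simp only [Finset.coe_biUnion, Set.mem_iUnion, Finset.mem_coe]
            refine ⟨C, hCA, ?_⟩
            rw [htdef, Set.mem_toFinset]
            exact hxN
          exact he.2 x hx hxS₀
        have ha' : a ∈ VS \ S₀ := ⟨ha.1, fun h => ha.2 (hS₀S h)⟩
        exact ⟨⟨a, ha', by rw [hcomp, heq]⟩, claim1 _ C.2⟩
      have hsub : ↑(A.image Subtype.val)
          ⊆ G.oddComps (VS \ S₀) (G.avoidE ES S₀) := by
        intro C hC
        simp only [Finset.coe_image, Set.mem_image, Finset.mem_coe] at hC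
        obtain ⟨D, hD, rfl⟩ := hC
        exact hmem D hD
      have hcount : (A.image Subtype.val).card
          ≤ (G.oddComps (VS \ S₀) (G.avoidE ES S₀)).ncard := by
        rw [← Set.ncard_coe_finset]
        exact Set.ncard_le_ncard hsub (Set.toFinite _)
      have hTut := hT S₀ (hS₀S.trans hSVS)
      rw [Set.ncard_coe_finset] at hTut
      have himg : (A.image Subtype.val).card = A.card :=
        Finset.card_image_of_injective A Subtype.val_injective
      omega
    obtain ⟨f, hfinj, hft⟩ := (Finset.all_card_le_biUnion_card_iff_exists_injective t).mp hall
    have hbase : ∀ C : ↥(G.compsIn (VS \ S) (G.avoidE ES S)),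
        ∃ a, a ∈ VS \ S ∧ G.comp (G.avoidE ES S) a = (C : Set V) := by
      intro C; obtain ⟨a, ha, heq⟩ := C.2; exact ⟨a, ha, heq⟩
    choose bp hbp hbpeq using hbase
    have hfN : ∀ C, f C ∈ N C := by
      intro C; have := hft C; rwa [htdef, Set.mem_toFinset] at this
    have hedge : ∀ C : ↥(G.compsIn (VS \ S) (G.avoidE ES S)),
        ∃ q : E × V, q.1 ∈ ES ∧ q.2 ∈ (C : Set V) ∧ G.ends q.1 = s(q.2, f C) := by
      intro C
      obtain ⟨hfS, e, he, x, hx, hends⟩ := hfN C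
      exact ⟨(e, x), he, hx, hends⟩
    choose q hq1 hq2 hq3 using hedge
    have hfS : ∀ C, f C ∈ S := fun C => (hfN C).1
    have hrange : Set.range f = S := by
      have hsub : Set.range f ⊆ S := by rintro s ⟨C, rfl⟩; exact hfS C
      refine Set.eq_of_subset_of_ncard_le hsub ?_ (Set.toFinite _)
      have h1 : Nat.card ↥(Set.range f) = Nat.card ↥(G.compsIn (VS \ S) (G.avoidE ES S)) :=
        Nat.card_range_of_injective hfinj
      rw [Nat.card_coe_set_eq, Nat.card_coe_set_eq, hcompscard] at h1
      omega
    have hCsub : ∀ C : ↥(G.compsIn (VS \ S) (G.avoidE ES S)), (C : Set V) ⊆ VS \ S := by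
      intro C; rw [← hbpeq C]; exact comp_subset_of_edgesWithin hEW (hbp C)
    have hCdisj : ∀ C D : ↥(G.compsIn (VS \ S) (G.avoidE ES S)), C ≠ D →
        Disjoint (C : Set V) (D : Set V) := by
      intro C D hne
      rcases comps_eq_or_disjoint C.2 D.2 with heq | h
      · exact absurd (Subtype.ext heq) hne
      · exact h
    have hbpeq' : ∀ C : ↥(G.compsIn (VS \ S) (G.avoidE ES S)),
        G.comp (G.avoidE ES S) (bp C) = (C : Set V) := fun C => hbpeq C
    have hrec : ∀ C : ↥(G.compsIn (VS \ S) (G.avoidE ES S)), ∃ M,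
        G.IsPerfectMatchingOn ((C : Set V) \ {(q C).2})
          (G.withinE ES ((C : Set V) \ {(q C).2})) M := by
      intro C
      set v := (q C).2 with hvdef
      set X := (C : Set V) \ {v} with hXdef
      have hvC : v ∈ (C : Set V) := hq2 C
      have hCcard : (C : Set V).ncard ≤ n := by
        have h1 : (C : Set V) ⊆ VS \ S := hCsub C
        have h2 : (VS \ S).ncard = VS.ncard - S.ncard :=
          Set.ncard_diff hSVS (Set.toFinite _)
        have h3 : (C : Set V).ncard ≤ (VS \ S).ncard :=
          Set.ncard_le_ncard h1 (Set.toFinite _)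
        omega
      have hXcard : X.ncard ≤ n :=
        le_trans (Set.ncard_le_ncard Set.diff_subset (Set.toFinite _)) hCcard
      have hEX : G.EdgesWithin X (G.withinE ES X) := fun e he x hx => he.2 x hx
      have hCodd' : Odd (C : Set V).ncard := claim1 _ C.2
      have hTX : G.TutteCond X (G.withinE ES X) := by
        intro T hTsub
        set W : Set V := {v} ∪ T with hWdef
        have hWC : W ⊆ (C : Set V) := by
          intro w hw
          rcases hw with h1 | h2
          · rw [Set.mem_singleton_iff.mp h1]; exact hvC
          · exact (hTsub h2).1
        have hvT : v ∉ T := fun h => (hTsub h).2 rfl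
        have hcompsub : ∀ y ∈ (C : Set V) \ W,
            G.comp (G.avoidE ES (S ∪ W)) y ⊆ (C : Set V) \ W := by
          intro y hy u hu
          have hyW : y ∉ S ∪ W := by
            rintro (h1 | h2)
            · exact ((hCsub C) hy.1).2 h1
            · exact hy.2 h2
          constructor
          · have hmono : G.comp (G.avoidE ES (S ∪ W)) y ⊆ G.comp (G.avoidE ES S) y :=
              comp_mono (fun e' he' => ⟨he'.1, fun x hx hxS => he'.2 x hx (Or.inl hxS)⟩)
            have hyc : y ∈ G.comp (G.avoidE ES S) (bp C) := by rw [hbpeq' C]; exact hy.1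
            rw [← hbpeq' C, ← comp_eq_of_mem hyc]
            exact hmono hu
          · exact fun huW =>
              Set.disjoint_left.mp (comp_avoidE_disjoint hyW) hu (Or.inr huW)
        have hcompeq : ∀ y ∈ (C : Set V) \ W,
            G.comp (G.avoidE ES (S ∪ W)) y = G.comp (G.avoidE (G.withinE ES X) T) y := by
          intro y hy
          have h12 : G.avoidE (G.withinE ES X) T ⊆ G.avoidE ES (S ∪ W) := by
            rintro e ⟨⟨heES, hins⟩, havoid⟩
            refine ⟨heES, fun x hx hxSW => ?_⟩
            rcases hxSW with hxS | hxW
            · exact ((hCsub C) (hins x hx).1).2 hxS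
            · rcases hxW with h1 | h2
              · exact (hins x hx).2 h1
              · exact havoid x hx h2
          apply comp_subset_comp h12
          rintro e he ⟨z, hz, hzc⟩
          have hends : ∀ x ∈ G.ends e, x ∈ (C : Set V) \ W := fun x hx =>
            hcompsub y hy (comp_closed (LinkedOn.mono h12 hzc) he hz x hx)
          exact ⟨⟨he.1, fun x hx => ⟨(hends x hx).1, fun h1 => (hends x hx).2 (Or.inl h1)⟩⟩,
            fun x hx hxT => (hends x hx).2 (Or.inr hxT)⟩
        have hXT : X \ T = (C : Set V) \ W := by
          rw [hXdef, hWdef, Set.diff_diff]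
        have hEq : G.oddComps (X \ T) (G.avoidE (G.withinE ES X) T)
            = G.oddComps ((C : Set V) \ W) (G.avoidE ES (S ∪ W)) := by
          have himg : G.compsIn ((C : Set V) \ W) (G.avoidE (G.withinE ES X) T)
              = G.compsIn ((C : Set V) \ W) (G.avoidE ES (S ∪ W)) := by
            unfold compsIn
            exact Set.image_congr (fun y hy => (hcompeq y hy).symm)
          unfold oddComps
          rw [hXT, himg]
        have hWsub : W ⊆ G.comp (G.avoidE ES S) (bp C) := by rw [hbpeq' C]; exact hWC
        have hkey := key_count (S := S) hE (hbp C) hWsub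
        rw [hbpeq' C] at hkey
        have hCoddmem : (C : Set V) ∈ G.oddComps (VS \ S) (G.avoidE ES S) := by
          rw [hcompsodd]; exact C.2
        have h1 : (G.oddComps (VS \ S) (G.avoidE ES S) \ {(C : Set V)}).ncard
            = S.ncard - 1 := by
          rw [Set.ncard_diff_singleton_of_mem hCoddmem, htight]
        have hSWVS : S ∪ W ⊆ VS :=
          Set.union_subset hSVS (fun w hw => ((hCsub C) (hWC hw)).1)
        have hTut := hT (S ∪ W) hSWVS
        have hWcard : W.ncard = 1 + T.ncard := by
          rw [hWdef, Set.ncard_union_eq (Set.disjoint_singleton_left.mpr hvT)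
            (Set.toFinite _) (Set.toFinite _), Set.ncard_singleton]
        have hSWdisj : Disjoint S W :=
          Set.disjoint_left.mpr (fun s hs hsW => ((hCsub C) (hWC hsW)).2 hs)
        have hSWcard : (S ∪ W).ncard = S.ncard + W.ncard :=
          Set.ncard_union_eq hSWdisj (Set.toFinite _) (Set.toFinite _)
        have hpar := oddComps_parity (G := G) hcompsub
        rw [ZMod.natCast_eq_natCast_iff] at hpar
        have hparnat : (G.oddComps ((C : Set V) \ W) (G.avoidE ES (S ∪ W))).ncard % 2
            = ((C : Set V) \ W).ncard % 2 := hpar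
        have hCW : ((C : Set V) \ W).ncard + W.ncard = (C : Set V).ncard := by
          rw [Set.ncard_diff hWC (Set.toFinite _)]
          have := Set.ncard_le_ncard hWC (Set.toFinite _)
          omega
        rw [hEq]
        by_contra hcon
        push_neg at hcon
        rw [Nat.odd_iff] at hCodd'
        have hq : (G.oddComps (VS \ (S ∪ W)) (G.avoidE ES (S ∪ W))).ncard
            = (S ∪ W).ncard := by omega
        exact hmax (S ∪ W) hSWVS (by omega) hq
      obtain ⟨M, hM⟩ := ih X (G.withinE ES X) hXcard hEX hTX
      exact ⟨M, hM⟩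
    choose MC hMC using hrec
    have hMsub : ∀ C, ∀ e ∈ MC C, ∀ x ∈ G.ends e, x ∈ (C : Set V) \ {(q C).2} :=
      fun C e he x hx => ((hMC C).1 he).2 x hx
    refine ⟨(⋃ C, MC C) ∪ Set.range (fun C => (q C).1), ?_, ?_, ?_⟩
    · rintro e (he | he)
      · simp only [Set.mem_iUnion] at he
        obtain ⟨C, hC⟩ := he
        exact ((hMC C).1 hC).1
      · obtain ⟨C, rfl⟩ := he
        exact hq1 C
    · rintro e (he | he)
      · simp only [Set.mem_iUnion] at he
        obtain ⟨C, hC⟩ := he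
        exact (hMC C).2.1 e hC
      · obtain ⟨C, rfl⟩ := he
        intro hdiag
        rw [hq3 C, Sym2.mk_isDiag_iff] at hdiag
        exact ((hCsub C) (hq2 C)).2 (hdiag ▸ hfS C)
    · intro u huVS
      by_cases huS : u ∈ S
      · rw [← hrange] at huS
        obtain ⟨C₀, rfl⟩ := huS
        refine ⟨(q C₀).1, ⟨Or.inr ⟨C₀, rfl⟩, by rw [hq3 C₀]; exact Sym2.mem_mk_right _ _⟩, ?_⟩
        rintro e' ⟨(he' | he'), hue'⟩
        · simp only [Set.mem_iUnion] at he'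
          obtain ⟨C, hC⟩ := he'
          exact absurd (hfS C₀) ((hCsub C ((hMsub C _ hC _ hue').1)).2)
        · obtain ⟨C, rfl⟩ := he'
          rw [hq3 C, Sym2.mem_iff] at hue'
          rcases hue' with h | h
          · exact absurd (h ▸ hfS C₀) ((hCsub C) (hq2 C)).2
          · rw [hfinj h]
      · have hu' : u ∈ VS \ S := ⟨huVS, huS⟩
        set C₀ : ↥(G.compsIn (VS \ S) (G.avoidE ES S)) :=
          ⟨G.comp (G.avoidE ES S) u, ⟨u, hu', rfl⟩⟩ with hC₀def
        have huC₀ : u ∈ (C₀ : Set V) := mem_comp_self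
        by_cases huv : u = (q C₀).2
        · refine ⟨(q C₀).1, ⟨Or.inr ⟨C₀, rfl⟩,
            by rw [hq3 C₀, ← huv]; exact Sym2.mem_mk_left _ _⟩, ?_⟩
          rintro e' ⟨(he' | he'), hue'⟩
          · simp only [Set.mem_iUnion] at he'
            obtain ⟨C, hC⟩ := he'
            have h1 := hMsub C _ hC _ hue'
            have hCC₀ : C = C₀ := by
              by_contra hne
              exact Set.disjoint_left.mp (hCdisj C C₀ hne) h1.1 huC₀
            rw [hCC₀] at h1
            exact absurd (Set.mem_singleton_iff.mpr huv) h1.2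
          · obtain ⟨C, rfl⟩ := he'
            rw [hq3 C, Sym2.mem_iff] at hue'
            rcases hue' with h | h
            · have huC : u ∈ (C : Set V) := h ▸ hq2 C
              have hCC₀ : C = C₀ := by
                by_contra hne
                exact Set.disjoint_left.mp (hCdisj C C₀ hne) huC huC₀
              rw [hCC₀]
            · exact absurd (h ▸ hfS C) huS
        · have huX : u ∈ (C₀ : Set V) \ {(q C₀).2} := ⟨huC₀, by simpa using huv⟩
          obtain ⟨e₀, ⟨he₀M, he₀u⟩, huniq⟩ := (hMC C₀).2.2 u huX
          refine ⟨e₀, ⟨Or.inl (Set.mem_iUnion.mpr ⟨C₀, he₀M⟩), he₀u⟩, ?_⟩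
          rintro e' ⟨(he' | he'), hue'⟩
          · simp only [Set.mem_iUnion] at he'
            obtain ⟨C, hC⟩ := he'
            have h1 := hMsub C _ hC _ hue'
            have hCC₀ : C = C₀ := by
              by_contra hne
              exact Set.disjoint_left.mp (hCdisj C C₀ hne) h1.1 huC₀
            exact huniq e' ⟨by rw [← hCC₀]; exact hC, hue'⟩
          · obtain ⟨C, rfl⟩ := he'
            rw [hq3 C, Sym2.mem_iff] at hue'
            rcases hue' with h | h
            · have huC : u ∈ (C : Set V) := h ▸ hq2 C
              have hCC₀ : C = C₀ := by
                by_contra hne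
                exact Set.disjoint_left.mp (hCdisj C C₀ hne) huC huC₀
              rw [hCC₀] at h
              exact absurd h huv
            · exact absurd (h ▸ hfS C) huS

/-- Edges with at least one, but not all, endpoints in `S`. -/
def cutSet (G : Multigraph V E) (S : Set V) : Set E :=
  {e | (∃ x ∈ G.ends e, x ∈ S) ∧ ¬ (∀ x ∈ G.ends e, x ∈ S)}

lemma degOn_cast (v : V) :
    ((G.degOn Set.univ v : ℕ) : ZMod 2) =
      ∑ e : E, ((if v ∈ G.ends e then (1 : ZMod 2) else 0)
        + (if G.ends e = s(v, v) then (1 : ZMod 2) else 0)) := by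
  rw [degOn]
  push_cast
  rw [Finset.sum_add_distrib]
  congr 1
  · have h1 : {e ∈ Set.univ | v ∈ G.ends e}.ncard
        = (Finset.univ.filter (fun e => v ∈ G.ends e)).card := by
      rw [Set.ncard_eq_toFinset_card']; congr 1; ext e; simp
    rw [h1, Finset.card_filter]
    push_cast
    rfl
  · have h1 : {e ∈ Set.univ | G.ends e = s(v, v)}.ncard
        = (Finset.univ.filter (fun e => G.ends e = s(v, v))).card := by
      rw [Set.ncard_eq_toFinset_card']; congr 1; ext e; simp
    rw [h1, Finset.card_filter]
    push_cast
    rfl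

lemma per_edge_sum (S : Set V) (e : E) :
    (∑ v ∈ S.toFinset, ((if v ∈ G.ends e then (1 : ZMod 2) else 0)
        + (if G.ends e = s(v, v) then (1 : ZMod 2) else 0)))
      = if e ∈ G.cutSet S then 1 else 0 := by
  induction' h : (G.ends e) using Sym2.inductionOn with a b
  have hmem : e ∈ G.cutSet S ↔ ((a ∈ S ∨ b ∈ S) ∧ ¬(a ∈ S ∧ b ∈ S)) := by
    simp only [cutSet, Set.mem_setOf_eq, h, Sym2.mem_iff]
    constructor
    · rintro ⟨⟨x, hx, hxS⟩, hnall⟩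
      refine ⟨?_, fun hall => hnall (fun y hy => ?_)⟩
      · rcases hx with rfl | rfl
        · exact Or.inl hxS
        · exact Or.inr hxS
      · rcases hy with rfl | rfl
        · exact hall.1
        · exact hall.2
    · rintro ⟨hsome, hnall⟩
      refine ⟨?_, fun hall => hnall ⟨hall a (Or.inl rfl), hall b (Or.inr rfl)⟩⟩
      rcases hsome with hs | hs
      · exact ⟨a, Or.inl rfl, hs⟩
      · exact ⟨b, Or.inr rfl, hs⟩
  have hsummand : ∀ w : V, ((if w ∈ s(a, b) then (1 : ZMod 2) else 0)
        + (if s(a, b) = s(w, w) then (1 : ZMod 2) else 0))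
      = (if w = a then 1 else 0) + (if w = b then 1 else 0) := by
    intro w
    have hd : (s(a, b) = s(w, w)) ↔ (a = w ∧ b = w) := by
      rw [Sym2.eq_iff]; tauto
    simp only [Sym2.mem_iff, hd]
    rcases eq_or_ne w a with rfl | hwa
    · rcases eq_or_ne w b with rfl | hwb
      · simp
      · simp [hwb, Ne.symm hwb]
    · rcases eq_or_ne w b with rfl | hwb
      · simp [hwa, Ne.symm hwa, add_comm]
      · simp [hwa, hwb, Ne.symm hwa, Ne.symm hwb]
  rw [Finset.sum_congr rfl (fun w _ => hsummand w), Finset.sum_add_distrib,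
    Finset.sum_ite_eq' S.toFinset a (fun _ => (1 : ZMod 2)),
    Finset.sum_ite_eq' S.toFinset b (fun _ => (1 : ZMod 2)), hmem]
  by_cases haS : a ∈ S <;> by_cases hbS : b ∈ S <;>
    simp [haS, hbS, Set.mem_toFinset] <;> decide

lemma handshake (hcubic : G.CubicOn Set.univ Set.univ) (S : Set V) :
    ((S.ncard : ℕ) : ZMod 2) = ((G.cutSet S).ncard : ZMod 2) := by
  have h1 : (∑ v ∈ S.toFinset, ((G.degOn Set.univ v : ℕ) : ZMod 2))
      = ∑ e : E, (if e ∈ G.cutSet S then (1 : ZMod 2) else 0) := by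
    rw [Finset.sum_congr rfl (fun v _ => degOn_cast v), Finset.sum_comm]
    exact Finset.sum_congr rfl (fun e _ => per_edge_sum S e)
  have h2 : ∀ v ∈ S.toFinset, ((G.degOn Set.univ v : ℕ) : ZMod 2) = 1 := by
    intro v _
    rw [hcubic.2 v (Set.mem_univ v)]
    decide
  rw [Finset.sum_congr rfl h2, Finset.sum_const, nsmul_eq_mul, mul_one] at h1
  rw [Set.ncard_eq_toFinset_card', h1, Finset.sum_boole]
  congr 1
  rw [Set.ncard_eq_toFinset_card']
  congr 1
  ext e; simp

lemma univ_even (hcubic : G.CubicOn Set.univ Set.univ) :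
    (Set.univ : Set V).ncard % 2 = 0 := by
  have h := handshake hcubic Set.univ
  have hcut : G.cutSet Set.univ = ∅ := by
    ext e; simp [cutSet]
  rw [hcut, Set.ncard_empty] at h
  have h2 : (((Set.univ : Set V).ncard : ℕ) : ZMod 2) = ((0 : ℕ) : ZMod 2) := by
    simpa using h
  rw [ZMod.natCast_eq_natCast_iff] at h2
  unfold Nat.ModEq at h2
  omega

/-- The edges between `C` and `T`. -/
def cutE (G : Multigraph V E) (T C : Set V) : Set E :=
  {e | ∃ x ∈ C, ∃ t ∈ T, G.ends e = s(x, t)}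

lemma edgesWithin_univ : G.EdgesWithin Set.univ Set.univ :=
  fun _ _ x _ => Set.mem_univ x

lemma cutSet_eq_cutE {T C : Set V}
    (hC : C ∈ G.compsIn (Set.univ \ T) (G.avoidE Set.univ T)) :
    G.cutSet C = G.cutE T C := by
  have hEu : G.EdgesWithin (Set.univ \ T) (G.avoidE Set.univ T) :=
    avoidE_edgesWithin edgesWithin_univ
  obtain ⟨a, ha, rfl⟩ := hC
  have hsub : G.comp (G.avoidE Set.univ T) a ⊆ Set.univ \ T :=
    comp_subset_of_edgesWithin hEu ha
  ext e
  constructor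
  · rintro ⟨⟨z, hz, hzC⟩, hnall⟩
    push_neg at hnall
    obtain ⟨w, hw, hwC⟩ := hnall
    by_cases hT : ∀ x ∈ G.ends e, x ∉ T
    · exact absurd (comp_closed hzC ⟨Set.mem_univ e, hT⟩ hz w hw) hwC
    · push_neg at hT
      obtain ⟨t, ht, htT⟩ := hT
      have hzt : z ≠ t := fun h => (hsub hzC).2 (h ▸ htT)
      exact ⟨z, hzC, t, htT, ends_eq_of_mem hz ht hzt⟩
  · rintro ⟨x, hxC, t, htT, hends⟩
    refine ⟨⟨x, by rw [hends]; exact Sym2.mem_mk_left _ _, hxC⟩, fun hall => ?_⟩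
    exact (hsub (hall t (by rw [hends]; exact Sym2.mem_mk_right _ _))).2 htT

lemma cut_singleton_bridge {T C : Set V}
    (hC : C ∈ G.compsIn (Set.univ \ T) (G.avoidE Set.univ T)) {f : E}
    (hcut : G.cutE T C = {f}) : G.IsBridgeOn Set.univ Set.univ f := by
  have hEu : G.EdgesWithin (Set.univ \ T) (G.avoidE Set.univ T) :=
    avoidE_edgesWithin edgesWithin_univ
  obtain ⟨a, ha, rfl⟩ := hC
  have hsub : G.comp (G.avoidE Set.univ T) a ⊆ Set.univ \ T :=
    comp_subset_of_edgesWithin hEu ha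
  have hf : f ∈ G.cutE T (G.comp (G.avoidE Set.univ T) a) := by rw [hcut]; rfl
  obtain ⟨x, hxC, t, htT, hends⟩ := hf
  refine ⟨Set.mem_univ f, x, Set.mem_univ x, t, Set.mem_univ t,
    Relation.ReflTransGen.single ⟨f, Set.mem_univ f, hends⟩, fun hlink => ?_⟩
  have hstay : ∀ z, G.LinkedOn (Set.univ \ {f}) x z →
      z ∈ G.comp (G.avoidE Set.univ T) a := by
    intro z hz
    induction hz with
    | refl => exact hxC
    | @tail b c hb hstep ih =>
      obtain ⟨e, he, hends'⟩ := hstep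
      by_cases hT : ∀ y ∈ G.ends e, y ∉ T
      · exact comp_closed ih ⟨Set.mem_univ e, hT⟩
          (by rw [hends']; exact Sym2.mem_mk_left _ _) _
          (by rw [hends']; exact Sym2.mem_mk_right _ _)
      · push_neg at hT
        obtain ⟨t', ht', htT'⟩ := hT
        have hbt' : b ≠ t' := fun h => (hsub ih).2 (h ▸ htT')
        have hef : e ∈ G.cutE T (G.comp (G.avoidE Set.univ T) a) :=
          ⟨b, ih, t', htT',
            ends_eq_of_mem (by rw [hends']; exact Sym2.mem_mk_left _ _) ht' hbt'⟩
        rw [hcut] at hef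
        exact absurd hef he.2
  exact (hsub (hstay t hlink)).2 htT

theorem cubic_tutteCond (hcubic : G.CubicOn Set.univ Set.univ)
    (hbridges : {f : E | G.IsBridgeOn Set.univ Set.univ f}.ncard ≤ 2) :
    G.TutteCond Set.univ Set.univ := by
  intro T hTsub
  set F := (G.oddComps (Set.univ \ T) (G.avoidE Set.univ T)).toFinset with hF
  have hqF : (G.oddComps (Set.univ \ T) (G.avoidE Set.univ T)).ncard = F.card :=
    Set.ncard_eq_toFinset_card' _
  have hcutodd : ∀ C ∈ F, (G.cutE T C).ncard % 2 = 1 := by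
    intro C hCF
    rw [hF, Set.mem_toFinset] at hCF
    obtain ⟨hC, hodd⟩ := hCF
    have h1 := handshake hcubic C
    rw [cutSet_eq_cutE hC, ZMod.natCast_eq_natCast_iff] at h1
    unfold Nat.ModEq at h1
    rw [Nat.odd_iff] at hodd
    omega
  have hmemF : ∀ C ∈ F, C ∈ G.compsIn (Set.univ \ T) (G.avoidE Set.univ T) := by
    intro C hCF
    rw [hF, Set.mem_toFinset] at hCF
    exact hCF.1
  have hEu : G.EdgesWithin (Set.univ \ T) (G.avoidE Set.univ T) :=
    avoidE_edgesWithin edgesWithin_univ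
  have hdisj : ∀ C ∈ F, ∀ D ∈ F, C ≠ D →
      Disjoint (G.cutE T C).toFinset (G.cutE T D).toFinset := by
    intro C hCF D hDF hne
    rw [Set.disjoint_toFinset, Set.disjoint_left]
    rintro e ⟨x, hxC, t, htT, hends⟩ ⟨x', hxD, t', htT', hends'⟩
    have hDsub : D ⊆ Set.univ \ T := by
      obtain ⟨a, ha, heq⟩ := hmemF D hDF
      rw [← heq]; exact comp_subset_of_edgesWithin hEu ha
    have hx'mem : x' ∈ G.ends e := by rw [hends']; exact Sym2.mem_mk_left _ _
    rw [hends, Sym2.mem_iff] at hx'mem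
    rcases hx'mem with rfl | rfl
    · rcases comps_eq_or_disjoint (hmemF C hCF) (hmemF D hDF) with heq | hd
      · exact absurd heq hne
      · exact Set.disjoint_left.mp hd hxC hxD
    · exact (hDsub hxD).2 htT
  have hsum_le : ∑ C ∈ F, (G.cutE T C).ncard ≤ 3 * T.ncard := by
    have h2 : (F.biUnion (fun C => (G.cutE T C).toFinset))
        ⊆ T.toFinset.biUnion (fun t => {e : E | t ∈ G.ends e}.toFinset) := by
      intro e he
      rw [Finset.mem_biUnion] at he ⊢
      obtain ⟨C, hCF, heC⟩ := he
      rw [Set.mem_toFinset] at heC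
      obtain ⟨x, hxC, t, htT, hends⟩ := heC
      exact ⟨t, Set.mem_toFinset.mpr htT, Set.mem_toFinset.mpr
        (by rw [Set.mem_setOf_eq, hends]; exact Sym2.mem_mk_right _ _)⟩
    have h3 : ∀ t ∈ T.toFinset, {e : E | t ∈ G.ends e}.toFinset.card ≤ 3 := by
      intro t _
      have hdeg := hcubic.2 t (Set.mem_univ t)
      rw [degOn] at hdeg
      have heq : {e ∈ (Set.univ : Set E) | t ∈ G.ends e} = {e : E | t ∈ G.ends e} := by
        ext e; simp
      rw [heq] at hdeg
      rw [← Set.ncard_eq_toFinset_card']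
      omega
    calc ∑ C ∈ F, (G.cutE T C).ncard
        = ∑ C ∈ F, (G.cutE T C).toFinset.card :=
          Finset.sum_congr rfl (fun C _ => Set.ncard_eq_toFinset_card' _)
      _ = (F.biUnion (fun C => (G.cutE T C).toFinset)).card :=
          (Finset.card_biUnion hdisj).symm
      _ ≤ (T.toFinset.biUnion (fun t => {e : E | t ∈ G.ends e}.toFinset)).card :=
          Finset.card_le_card h2
      _ ≤ ∑ t ∈ T.toFinset, {e : E | t ∈ G.ends e}.toFinset.card :=
          Finset.card_biUnion_le
      _ ≤ ∑ t ∈ T.toFinset, 3 := Finset.sum_le_sum h3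
      _ = 3 * T.ncard := by
          rw [Finset.sum_const, smul_eq_mul, Set.ncard_eq_toFinset_card', mul_comm]
  set k := (F.filter (fun C => (G.cutE T C).ncard = 1)).card with hk
  have hk2 : k ≤ 2 := by
    have hBsub : ((F.filter (fun C => (G.cutE T C).ncard = 1)).biUnion
        (fun C => (G.cutE T C).toFinset))
        ⊆ {f : E | G.IsBridgeOn Set.univ Set.univ f}.toFinset := by
      intro f hf
      rw [Finset.mem_biUnion] at hf
      obtain ⟨C, hCF, hfC⟩ := hf
      rw [Finset.mem_filter] at hCF
      rw [Set.mem_toFinset] at hfC ⊢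
      obtain ⟨g, hg⟩ := Set.ncard_eq_one.mp hCF.2
      have hfg : f = g := by rw [hg] at hfC; exact hfC
      exact cut_singleton_bridge (hmemF C hCF.1) (hfg ▸ hg)
    have hcard : ((F.filter (fun C => (G.cutE T C).ncard = 1)).biUnion
        (fun C => (G.cutE T C).toFinset)).card = k := by
      rw [Finset.card_biUnion (fun C hC D hD hne =>
        hdisj C (Finset.mem_filter.mp hC).1 D (Finset.mem_filter.mp hD).1 hne)]
      have h1 : ∀ C ∈ F.filter (fun C => (G.cutE T C).ncard = 1),
          (G.cutE T C).toFinset.card = 1 := by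
        intro C hC
        rw [← Set.ncard_eq_toFinset_card']
        exact (Finset.mem_filter.mp hC).2
      rw [Finset.sum_congr rfl h1, Finset.sum_const, smul_eq_mul, mul_one]
    have hble := Finset.card_le_card hBsub
    rw [hcard] at hble
    have hb2 : {f : E | G.IsBridgeOn Set.univ Set.univ f}.toFinset.card ≤ 2 := by
      rw [← Set.ncard_eq_toFinset_card']
      exact hbridges
    omega
  have hlb : ∀ C ∈ F, (if (G.cutE T C).ncard = 1 then 1 else 3) ≤ (G.cutE T C).ncard := by
    intro C hCF
    have := hcutodd C hCF
    by_cases h1 : (G.cutE T C).ncard = 1 <;> simp [h1] <;> omega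
  have hsum_ge : ∑ C ∈ F, (if (G.cutE T C).ncard = 1 then 1 else 3)
      ≤ ∑ C ∈ F, (G.cutE T C).ncard := Finset.sum_le_sum hlb
  have hsum2 : ∑ C ∈ F, (if (G.cutE T C).ncard = 1 then 1 else 3)
      = k * 1 + (F.filter (fun C => ¬((G.cutE T C).ncard = 1))).card * 3 := by
    rw [Finset.sum_ite, Finset.sum_const, Finset.sum_const, smul_eq_mul, smul_eq_mul]
  have hfcount := Finset.card_filter_add_card_filter_not
    (s := F) (p := fun C => (G.cutE T C).ncard = 1)
  have hpar := oddComps_parity (G := G) (X := Set.univ \ T) (ES := G.avoidE Set.univ T)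
      (fun x hx => comp_subset_of_edgesWithin hEu hx)
  rw [ZMod.natCast_eq_natCast_iff] at hpar
  unfold Nat.ModEq at hpar
  have hdiff : (Set.univ \ T).ncard = (Set.univ : Set V).ncard - T.ncard :=
    Set.ncard_diff hTsub (Set.toFinite _)
  have hTle : T.ncard ≤ (Set.univ : Set V).ncard :=
    Set.ncard_le_ncard hTsub (Set.toFinite _)
  have heven := univ_even (G := G) hcubic
  omega

end Multigraph

/-- Every cubic multigraph with at most two bridges contains a perfect
matching. -/
theorem cubic_at_most_two_bridges_perfect_matching {V E : Type} [Fintype V] [Fintype E]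
    (G : Multigraph V E)
    (hcubic : G.CubicOn Set.univ Set.univ)
    (hbridges : {f : E | G.IsBridgeOn Set.univ Set.univ f}.ncard ≤ 2) :
    ∃ M : Set E, G.IsPerfectMatchingOn Set.univ Set.univ M := by
  obtain ⟨M, hM⟩ := Multigraph.tutte_aux (G := G) ((Set.univ : Set V).ncard)
    Set.univ Set.univ le_rfl Multigraph.edgesWithin_univ
    (Multigraph.cubic_tutteCond hcubic hbridges)
  exact ⟨M, hM⟩
end

section
/- Let G be a bridgeless cubic multigraph and {v,w} a single edge of G (i.e., exactly one edge joins v and w). Let {a,v},{b,v} be the other edges at v and {c,w},{d,w} the other edges at w. Define H1 = ((G\v)\w) ∪ {a,c} ∪ {b,d} and H2 = ((G\v)\w) ∪ {a,d} ∪ {b,c}. Then both H1 and H2 are cubic, and at least one of H1, H2 is bridgeless. -/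
namespace FrinkAux
open Multigraph

variable {V E : Type}

/-- edge `e` does not cross the vertex set `Z`. -/
def NC (G : Multigraph V E) (Z : Set V) (e : E) : Prop :=
  ∀ x ∈ G.ends e, ∀ y ∈ G.ends e, (x ∈ Z ↔ y ∈ Z)

lemma ncIn {G : Multigraph V E} {Z : Set V} {e : E}
    (h : ∀ x ∈ G.ends e, x ∈ Z) : NC G Z e :=
  fun x hx y hy => by simp [h x hx, h y hy]

lemma ncOut {G : Multigraph V E} {Z : Set V} {e : E}
    (h : ∀ x ∈ G.ends e, x ∉ Z) : NC G Z e :=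
  fun x hx y hy => by simp [h x hx, h y hy]

lemma nc_inter {G : Multigraph V E} {S T : Set V} {e : E}
    (hS : NC G S e) (hT : NC G T e) : NC G (S ∩ T) e :=
  fun x hx y hy => by simp only [Set.mem_inter_iff, hS x hx y hy, hT x hx y hy]

lemma nc_union {G : Multigraph V E} {S T : Set V} {e : E}
    (hS : NC G S e) (hT : NC G T e) : NC G (S ∪ T) e :=
  fun x hx y hy => by simp only [Set.mem_union, hS x hx y hy, hT x hx y hy]

lemma nc_compl {G : Multigraph V E} {S : Set V} {e : E}
    (hS : NC G S e) : NC G Sᶜ e :=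
  fun x hx y hy => by simp only [Set.mem_compl_iff, hS x hx y hy]

lemma sym2_eq_of_mem {x y : V} {z : Sym2 V} (hx : x ∈ z) (hy : y ∈ z)
    (hne : x ≠ y) : z = s(x, y) := by
  induction z using Sym2.ind with
  | _ u v =>
    rw [Sym2.mem_iff] at hx hy
    rcases hx with rfl | rfl <;> rcases hy with rfl | rfl
    · exact absurd rfl hne
    · rfl
    · exact Sym2.eq_swap
    · exact absurd rfl hne

lemma linked_mem {G : Multigraph V E} {ES : Set E} {Z : Set V}
    (h : ∀ e ∈ ES, NC G Z e) {x y : V} (hxy : G.LinkedOn ES x y) (hx : x ∈ Z) : y ∈ Z := by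
  induction hxy with
  | refl => exact hx
  | tail _ hstep ih =>
    obtain ⟨e, he, hends⟩ := hstep
    exact (h e he _ (by rw [hends]; exact Sym2.mem_mk_left _ _) _
      (by rw [hends]; exact Sym2.mem_mk_right _ _)).mp ih

/-- In a connected bridgeless graph, no vertex set has a cut of size ≤ 1. -/
lemma no_one_cut {G : Multigraph V E}
    (hconn : G.ConnectedOn Set.univ Set.univ)
    (hbridgeless : G.BridgelessOn Set.univ Set.univ)
    (Z : Set V) (g : E) (p q : V) (hp : p ∈ Z) (hq : q ∉ Z)
    (h : ∀ e, e ≠ g → NC G Z e) : False := by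
  by_cases hg : NC G Z g
  · have hall : ∀ e ∈ (Set.univ : Set E), NC G Z e := by
      intro e _
      by_cases he : e = g
      · exact he ▸ hg
      · exact h e he
    exact hq (linked_mem hall (hconn.2 p trivial q trivial) hp)
  · simp only [NC, not_forall] at hg
    obtain ⟨x, hx, y, hy, hxy⟩ := hg
    have hlem : ∀ x' y' : V, x' ∈ G.ends g → y' ∈ G.ends g → x' ∈ Z → y' ∉ Z → False := by
      intro x' y' hx' hy' hxZ hyZ
      refine hbridgeless g ⟨trivial, x', trivial, y', trivial, hconn.2 x' trivial y' trivial, ?_⟩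
      intro hlink
      refine hyZ (linked_mem (Z := Z) ?_ hlink hxZ)
      intro e he
      exact h e (by simpa using he.2)
    by_cases hxZ : x ∈ Z
    · exact hlem x y hx hy hxZ (fun hyZ => hxy (by simp [hxZ, hyZ]))
    · have hyZ : y ∈ Z := by
        by_contra hyZ
        exact hxy (by simp [hxZ, hyZ])
      exact hlem y x hy hx hyZ hxZ

/-- From a bridge we extract a vertex set crossed only by the bridge. -/
lemma bridge_cut {E' : Type} (H : Multigraph V E') {VS : Set V} {ES : Set E'}
    (hEW : H.EdgesWithin VS ES) {f : E'} (hbr : H.IsBridgeOn VS ES f) :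
    ∃ S : Set V, S ⊆ VS ∧ (∀ e ∈ ES, e ≠ f → NC H S e) ∧
      ∃ p ∈ H.ends f, ∃ q ∈ H.ends f, p ∈ S ∧ q ∉ S := by
  obtain ⟨hf, x, hx, y, hy, hlink, hnot⟩ := hbr
  set S : Set V := {z | H.LinkedOn (ES \ {f}) x z} with hS
  have hxS : x ∈ S := Relation.ReflTransGen.refl
  have hyS : y ∉ S := hnot
  have hsub : S ⊆ VS := by
    intro z hz
    induction hz with
    | refl => exact hx
    | tail _ hstep _ =>
      obtain ⟨e, he, hends⟩ := hstep
      exact hEW e he.1 _ (by rw [hends]; exact Sym2.mem_mk_right _ _)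
  have hnc : ∀ e ∈ ES, e ≠ f → NC H S e := by
    have key : ∀ e ∈ ES, e ≠ f → ∀ x' ∈ H.ends e, ∀ y' ∈ H.ends e, x' ∈ S → y' ∈ S := by
      intro e he hef x' hx' y' hy' hx'S
      by_cases hxy' : x' = y'
      · exact hxy' ▸ hx'S
      · exact Relation.ReflTransGen.tail hx'S
          ⟨e, ⟨he, by simp [hef]⟩, sym2_eq_of_mem hx' hy' hxy'⟩
    intro e he hef x' hx' y' hy'
    exact ⟨fun h' => key e he hef x' hx' y' hy' h', fun h' => key e he hef y' hy' x' hx' h'⟩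
  refine ⟨S, hsub, hnc, ?_⟩
  by_cases hgf : NC H S f
  · exfalso
    refine hyS (linked_mem (Z := S) ?_ hlink hxS)
    intro e he
    by_cases hef : e = f
    · exact hef ▸ hgf
    · exact hnc e he hef
  · simp only [NC, not_forall] at hgf
    obtain ⟨p, hp, q, hq, hpq⟩ := hgf
    by_cases hpS : p ∈ S
    · exact ⟨p, hp, q, hq, hpS, fun hqS => hpq (by simp [hpS, hqS])⟩
    · have hqS : q ∈ S := by
        by_contra hqS
        exact hpq (by simp [hpS, hqS])
      exact ⟨q, hq, p, hp, hqS, hpS⟩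

end FrinkAux
namespace FrinkAux
open Multigraph

variable {V E : Type}

open scoped Classical

lemma degOn_union [Fintype E] (G : Multigraph V E) (E1 E2 : Set E) (x : V)
    (hdis : Disjoint E1 E2) :
    G.degOn (E1 ∪ E2) x = G.degOn E1 x + G.degOn E2 x := by
  have h1 : {e ∈ E1 ∪ E2 | x ∈ G.ends e} = {e ∈ E1 | x ∈ G.ends e} ∪ {e ∈ E2 | x ∈ G.ends e} := by
    ext e; simp only [Set.mem_setOf_eq, Set.mem_union]; tauto
  have h2 : {e ∈ E1 ∪ E2 | G.ends e = s(x, x)} =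
      {e ∈ E1 | G.ends e = s(x, x)} ∪ {e ∈ E2 | G.ends e = s(x, x)} := by
    ext e; simp only [Set.mem_setOf_eq, Set.mem_union]; tauto
  have d1 : Disjoint {e ∈ E1 | x ∈ G.ends e} {e ∈ E2 | x ∈ G.ends e} :=
    hdis.mono (Set.sep_subset _ _) (Set.sep_subset _ _)
  have d2 : Disjoint {e ∈ E1 | G.ends e = s(x, x)} {e ∈ E2 | G.ends e = s(x, x)} :=
    hdis.mono (Set.sep_subset _ _) (Set.sep_subset _ _)
  rw [Multigraph.degOn, h1, h2, Set.ncard_union_eq d1 (Set.toFinite _) (Set.toFinite _),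
    Set.ncard_union_eq d2 (Set.toFinite _) (Set.toFinite _), Multigraph.degOn, Multigraph.degOn]
  ring

lemma degOn_singleton (G : Multigraph V E) (e : E) (x : V) :
    G.degOn {e} x = (if x ∈ G.ends e then 1 else 0) + (if G.ends e = s(x, x) then 1 else 0) := by
  rw [Multigraph.degOn]
  congr 1
  · split_ifs with h
    · have : {e' ∈ ({e} : Set E) | x ∈ G.ends e'} = {e} := by
        ext e'; simp only [Set.mem_setOf_eq, Set.mem_singleton_iff]
        constructor
        · rintro ⟨rfl, -⟩; rfl
        · rintro rfl; exact ⟨rfl, h⟩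
      rw [this, Set.ncard_singleton]
    · have : {e' ∈ ({e} : Set E) | x ∈ G.ends e'} = ∅ := by
        ext e'; simp only [Set.mem_setOf_eq, Set.mem_singleton_iff, Set.mem_empty_iff_false,
          iff_false, not_and]
        rintro rfl; exact h
      rw [this, Set.ncard_empty]
  · split_ifs with h
    · have : {e' ∈ ({e} : Set E) | G.ends e' = s(x, x)} = {e} := by
        ext e'; simp only [Set.mem_setOf_eq, Set.mem_singleton_iff]
        constructor
        · rintro ⟨rfl, -⟩; rfl
        · rintro rfl; exact ⟨rfl, h⟩
      rw [this, Set.ncard_singleton]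
    · have : {e' ∈ ({e} : Set E) | G.ends e' = s(x, x)} = ∅ := by
        ext e'; simp only [Set.mem_setOf_eq, Set.mem_singleton_iff, Set.mem_empty_iff_false,
          iff_false, not_and]
        rintro rfl; exact h
      rw [this, Set.ncard_empty]

lemma degOn_inl_image {E2 : Type} (G : Multigraph V E) (H : Multigraph V (E ⊕ E2))
    (hHl : ∀ e, H.ends (Sum.inl e) = G.ends e) (A : Set E) (x : V) :
    H.degOn (Sum.inl '' A) x = G.degOn A x := by
  have h1 : {e' ∈ Sum.inl '' A | x ∈ H.ends e'} = Sum.inl '' {e ∈ A | x ∈ G.ends e} := by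
    ext e'
    simp only [Set.mem_setOf_eq, Set.mem_image]
    constructor
    · rintro ⟨⟨e, he, rfl⟩, hx⟩; exact ⟨e, ⟨he, by rwa [hHl] at hx⟩, rfl⟩
    · rintro ⟨e, ⟨he, hx⟩, rfl⟩; exact ⟨⟨e, he, rfl⟩, by rwa [hHl]⟩
  have h2 : {e' ∈ Sum.inl '' A | H.ends e' = s(x, x)} =
      Sum.inl '' {e ∈ A | G.ends e = s(x, x)} := by
    ext e'
    simp only [Set.mem_setOf_eq, Set.mem_image]
    constructor
    · rintro ⟨⟨e, he, rfl⟩, hx⟩; exact ⟨e, ⟨he, by rwa [hHl] at hx⟩, rfl⟩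
    · rintro ⟨e, ⟨he, hx⟩, rfl⟩; exact ⟨⟨e, he, rfl⟩, by rwa [hHl]⟩
  rw [Multigraph.degOn, h1, h2, Set.ncard_image_of_injective _ Sum.inl_injective,
    Set.ncard_image_of_injective _ Sum.inl_injective, Multigraph.degOn]

end FrinkAux
namespace FrinkAux

open scoped Classical in
lemma deg_transfer {V : Type} (n : ℕ) (v w a b c d x : V)
    (hxv : ¬ x = v) (hxw : ¬ x = w) (hvx : ¬ v = x) (hwx : ¬ w = x)
    (h : n + (((if x ∈ s(v,w) then 1 else 0) + (if s(v,w) = s(x,x) then 1 else 0)) +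
      (((if x ∈ s(a,v) then 1 else 0) + (if s(a,v) = s(x,x) then 1 else 0)) +
       (((if x ∈ s(b,v) then 1 else 0) + (if s(b,v) = s(x,x) then 1 else 0)) +
        (((if x ∈ s(c,w) then 1 else 0) + (if s(c,w) = s(x,x) then 1 else 0)) +
         ((if x ∈ s(d,w) then 1 else 0) + (if s(d,w) = s(x,x) then 1 else 0)))))) = 3) :
    n + (((if x ∈ s(a,c) then 1 else 0) + (if s(a,c) = s(x,x) then 1 else 0)) +
      ((if x ∈ s(b,d) then 1 else 0) + (if s(b,d) = s(x,x) then 1 else 0))) = 3 := by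
  simp only [Sym2.mem_iff, Sym2.eq_iff, hxv, hxw, hvx, hwx, or_false, false_or, and_false,
    false_and, or_self, if_false, add_zero, zero_add] at h ⊢
  by_cases hxa : x = a <;> by_cases hxb : x = b <;> by_cases hxc : x = c <;>
    by_cases hxd : x = d <;>
    (try subst hxa) <;> (try subst hxb) <;> (try subst hxc) <;> (try subst hxd) <;>
    simp_all [@eq_comm _ _ x] <;> omega

end FrinkAux
namespace FrinkAux
open Multigraph

variable {V E : Type}

open scoped Classical in
lemma cubic_part [Fintype V] [Fintype E] (G : Multigraph V E)
    (hcubic : G.CubicOn Set.univ Set.univ)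
    (v w a b c d : V) (evw ea eb ec ed : E)
    (hevw : G.ends evw = s(v, w))
    (hea : G.ends ea = s(a, v)) (heb : G.ends eb = s(b, v))
    (hec : G.ends ec = s(c, w)) (hed : G.ends ed = s(d, w))
    (hab : ea ≠ eb) (hcd : ec ≠ ed)
    (ha : ea ≠ evw) (hb : eb ≠ evw) (hc : ec ≠ evw) (hd : ed ≠ evw)
    (hac : ea ≠ ec) (had : ea ≠ ed) (hbc : eb ≠ ec) (hbd : eb ≠ ed)
    (hav : a ≠ v) (haw : a ≠ w) (hbv : b ≠ v) (hbw : b ≠ w)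
    (hcv : c ≠ v) (hcw : c ≠ w) (hdv : d ≠ v) (hdw : d ≠ w)
    (hvE : ∀ e, v ∈ G.ends e → e = evw ∨ e = ea ∨ e = eb)
    (hwE : ∀ e, w ∈ G.ends e → e = evw ∨ e = ec ∨ e = ed)
    (H : Multigraph V (E ⊕ Fin 2))
    (hH0 : H.ends (Sum.inr 0) = s(a, c)) (hH1 : H.ends (Sum.inr 1) = s(b, d))
    (hHl : ∀ e, H.ends (Sum.inl e) = G.ends e)
    (VS : Set V) (ES : Set (E ⊕ Fin 2))
    (hVS : ∀ x, x ∈ VS ↔ x ≠ v ∧ x ≠ w)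
    (hES : ES = Sum.inl '' {e | e ∉ ({evw, ea, eb, ec, ed} : Set E)} ∪ Set.range Sum.inr) :
    H.CubicOn VS ES := by
  have hfin2 : ∀ i : Fin 2, i = 0 ∨ i = 1 := by decide
  constructor
  · -- EdgesWithin
    intro e' he' x hx
    rw [hES] at he'
    rcases he' with ⟨e, he, rfl⟩ | ⟨i, rfl⟩
    · rw [hHl] at hx
      rw [hVS]
      constructor
      · rintro rfl
        exact he (by rcases hvE e hx with rfl | rfl | rfl <;> simp)
      · rintro rfl
        exact he (by rcases hwE e hx with rfl | rfl | rfl <;> simp)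
    · rcases hfin2 i with rfl | rfl
      · rw [hH0, Sym2.mem_iff] at hx
        rcases hx with rfl | rfl
        · exact (hVS x).mpr ⟨hav, haw⟩
        · exact (hVS x).mpr ⟨hcv, hcw⟩
      · rw [hH1, Sym2.mem_iff] at hx
        rcases hx with rfl | rfl
        · exact (hVS x).mpr ⟨hbv, hbw⟩
        · exact (hVS x).mpr ⟨hdv, hdw⟩
  · -- degrees
    intro x hxVS
    obtain ⟨hxv, hxw⟩ := (hVS x).mp hxVS
    have hvx : ¬ v = x := fun h => hxv h.symm
    have hwx : ¬ w = x := fun h => hxw h.symm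
    have hrange : (Set.range (Sum.inr : Fin 2 → E ⊕ Fin 2)) = {Sum.inr 0} ∪ {Sum.inr 1} := by
      ext e'
      simp only [Set.mem_range, Set.mem_union, Set.mem_singleton_iff]
      constructor
      · rintro ⟨i, rfl⟩
        rcases hfin2 i with rfl | rfl
        · left; rfl
        · right; rfl
      · rintro (rfl | rfl) <;> exact ⟨_, rfl⟩
    have hdisj1 : Disjoint (Sum.inl '' {e | e ∉ ({evw, ea, eb, ec, ed} : Set E)} : Set (E ⊕ Fin 2))
        ({Sum.inr 0} ∪ {Sum.inr 1}) := by
      rw [Set.disjoint_left]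
      rintro e' ⟨e, -, rfl⟩ h
      simp at h
    have hdisj2 : Disjoint ({Sum.inr 0} : Set (E ⊕ Fin 2)) {Sum.inr 1} := by
      simp
    have hG3 := hcubic.2 x trivial
    have huniv : (Set.univ : Set E) =
        {e | e ∉ ({evw, ea, eb, ec, ed} : Set E)} ∪ {evw, ea, eb, ec, ed} := by
      ext e
      constructor
      · intro _
        exact Or.symm (em _)
      · intro _
        trivial
    have hdA : Disjoint {e | e ∉ ({evw, ea, eb, ec, ed} : Set E)} ({evw, ea, eb, ec, ed} : Set E) := by
      rw [Set.disjoint_left]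
      intro e he
      exact he
    have hins : ({evw, ea, eb, ec, ed} : Set E) = {evw} ∪ ({ea} ∪ ({eb} ∪ ({ec} ∪ {ed}))) := by
      rw [Set.insert_eq, Set.insert_eq, Set.insert_eq, Set.insert_eq]
    have hd3 : Disjoint ({evw} : Set E) ({ea} ∪ ({eb} ∪ ({ec} ∪ {ed}))) := by
      simp only [Set.disjoint_singleton_left, Set.mem_union, Set.mem_singleton_iff]
      push_neg
      exact ⟨Ne.symm ha, Ne.symm hb, Ne.symm hc, Ne.symm hd⟩
    have hd4 : Disjoint ({ea} : Set E) ({eb} ∪ ({ec} ∪ {ed})) := by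
      simp only [Set.disjoint_singleton_left, Set.mem_union, Set.mem_singleton_iff]
      push_neg
      exact ⟨hab, hac, had⟩
    have hd5 : Disjoint ({eb} : Set E) ({ec} ∪ {ed}) := by
      simp only [Set.disjoint_singleton_left, Set.mem_union, Set.mem_singleton_iff]
      push_neg
      exact ⟨hbc, hbd⟩
    have hd6 : Disjoint ({ec} : Set E) ({ed} : Set E) := by
      simp [hcd]
    rw [huniv, degOn_union G _ _ x hdA, hins, degOn_union G _ _ x hd3,
        degOn_union G _ _ x hd4, degOn_union G _ _ x hd5, degOn_union G _ _ x hd6,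
        degOn_singleton, degOn_singleton, degOn_singleton, degOn_singleton, degOn_singleton,
        hevw, hea, heb, hec, hed] at hG3
    rw [hES, hrange, degOn_union H _ _ x hdisj1, degOn_union H _ _ x hdisj2,
        degOn_inl_image G H hHl, degOn_singleton, degOn_singleton, hH0, hH1]
    exact deg_transfer _ v w a b c d x hxv hxw hvx hwx hG3
end FrinkAux
namespace FrinkAux
open Multigraph

variable {V E : Type}

set_option maxHeartbeats 1600000 in
lemma extract [Fintype V] [Fintype E] (G : Multigraph V E)
    (hconn : G.ConnectedOn Set.univ Set.univ)
    (hbridgeless : G.BridgelessOn Set.univ Set.univ)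
    (v w a b c d : V) (evw ea eb ec ed : E)
    (hevw : G.ends evw = s(v, w))
    (hea : G.ends ea = s(a, v)) (heb : G.ends eb = s(b, v))
    (hec : G.ends ec = s(c, w)) (hed : G.ends ed = s(d, w))
    (hav : a ≠ v) (haw : a ≠ w) (hbv : b ≠ v) (hbw : b ≠ w)
    (hcv : c ≠ v) (hcw : c ≠ w) (hdv : d ≠ v) (hdw : d ≠ w)
    (hvE : ∀ e, v ∈ G.ends e → e = evw ∨ e = ea ∨ e = eb)
    (hwE : ∀ e, w ∈ G.ends e → e = evw ∨ e = ec ∨ e = ed)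
    (H : Multigraph V (E ⊕ Fin 2))
    (hH0 : H.ends (Sum.inr 0) = s(a, c)) (hH1 : H.ends (Sum.inr 1) = s(b, d))
    (hHl : ∀ e, H.ends (Sum.inl e) = G.ends e)
    (VS : Set V) (ES : Set (E ⊕ Fin 2))
    (hVS : ∀ x, x ∈ VS ↔ x ≠ v ∧ x ≠ w)
    (hES : ∀ e', e' ∈ ES ↔
      ((∃ e, (¬ (e = evw ∨ e = ea ∨ e = eb ∨ e = ec ∨ e = ed)) ∧ e' = Sum.inl e) ∨
       ∃ i, e' = Sum.inr i))
    (f : E ⊕ Fin 2) (hbr : H.IsBridgeOn VS ES f) :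
    ∃ (g : E) (S : Set V),
      ¬ (g = evw ∨ g = ea ∨ g = eb ∨ g = ec ∨ g = ed) ∧ S ⊆ VS ∧
      a ∈ S ∧ c ∈ S ∧ b ∉ S ∧ d ∉ S ∧
      (∀ e, ¬ (e = g ∨ e = ea ∨ e = ec) → NC G S e) ∧
      ∃ p q, G.ends g = s(p, q) ∧ p ∈ S ∧ q ∉ S ∧ q ∈ VS := by
  have hfin2 : ∀ i : Fin 2, i = 0 ∨ i = 1 := by decide
  have hNCout2 : ∀ (Z : Set V) (e : E) (x y : V), G.ends e = s(x, y) → x ∉ Z → y ∉ Z →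
      NC G Z e := by
    intro Z e x y he hx hy
    apply ncOut
    intro z hz
    rw [he, Sym2.mem_iff] at hz
    rcases hz with rfl | rfl
    · exact hx
    · exact hy
  have hnotsp : ∀ e, ¬ (e = evw ∨ e = ea ∨ e = eb ∨ e = ec ∨ e = ed) →
      ∀ x ∈ G.ends e, x ∈ VS := by
    intro e he x hx
    rw [hVS]
    constructor
    · rintro rfl
      rcases hvE e hx with rfl | rfl | rfl <;> tauto
    · rintro rfl
      rcases hwE e hx with rfl | rfl | rfl <;> tauto
  have hEW : H.EdgesWithin VS ES := by
    intro e' he' x hx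
    rcases (hES e').mp he' with ⟨e, he, rfl⟩ | ⟨i, rfl⟩
    · rw [hHl] at hx
      exact hnotsp e he x hx
    · rcases hfin2 i with rfl | rfl
      · rw [hH0, Sym2.mem_iff] at hx
        rcases hx with rfl | rfl
        · exact (hVS x).mpr ⟨hav, haw⟩
        · exact (hVS x).mpr ⟨hcv, hcw⟩
      · rw [hH1, Sym2.mem_iff] at hx
        rcases hx with rfl | rfl
        · exact (hVS x).mpr ⟨hbv, hbw⟩
        · exact (hVS x).mpr ⟨hdv, hdw⟩
  obtain ⟨S0, hsub, hnc, p, hp, q, hq, hpS, hqS⟩ := bridge_cut H hEW hbr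
  have hfES := hbr.1
  have hvS0 : v ∉ S0 := fun h => ((hVS v).mp (hsub h)).1 rfl
  have hwS0 : w ∉ S0 := fun h => ((hVS w).mp (hsub h)).2 rfl
  have hncG : ∀ e, ¬ (e = evw ∨ e = ea ∨ e = eb ∨ e = ec ∨ e = ed) →
      Sum.inl e ≠ f → NC G S0 e := by
    intro e he hef x hx y hy
    have h' := hnc (Sum.inl e) ((hES _).mpr (Or.inl ⟨e, he, rfl⟩)) hef
    exact h' x (by rw [hHl]; exact hx) y (by rw [hHl]; exact hy)
  have hdiffVS : ∀ e, (∀ x ∈ G.ends e, x ∈ VS) → NC G S0 e → NC G (VS \ S0) e := by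
    intro e hv' hnce x hx y hy
    simp only [Set.mem_diff, hv' x hx, hv' y hy, true_and, hnce x hx y hy]
  rcases f with g | i
  · -- old edge is the bridge
    have hgsp : ¬ (g = evw ∨ g = ea ∨ g = eb ∨ g = ec ∨ g = ed) := by
      rcases (hES _).mp hfES with ⟨e, he, heq⟩ | ⟨i, heq⟩
      · cases Sum.inl.inj heq
        exact he
      · exact absurd heq (by simp)
    have hnc0 : NC H S0 (Sum.inr 0) := hnc _ ((hES _).mpr (Or.inr ⟨0, rfl⟩)) (by simp)
    have hnc1 : NC H S0 (Sum.inr 1) := hnc _ ((hES _).mpr (Or.inr ⟨1, rfl⟩)) (by simp)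
    have hacS : a ∈ S0 ↔ c ∈ S0 :=
      hnc0 a (by rw [hH0]; exact Sym2.mem_mk_left _ _) c (by rw [hH0]; exact Sym2.mem_mk_right _ _)
    have hbdS : b ∈ S0 ↔ d ∈ S0 :=
      hnc1 b (by rw [hH1]; exact Sym2.mem_mk_left _ _) d (by rw [hH1]; exact Sym2.mem_mk_right _ _)
    rw [hHl] at hp hq
    have hpq : p ≠ q := fun h => hqS (h ▸ hpS)
    have hends : G.ends g = s(p, q) := sym2_eq_of_mem hp hq hpq
    have hqVS : q ∈ VS := hnotsp g hgsp q hq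
    have hpVS : p ∈ VS := hnotsp g hgsp p hp
    have hncG' : ∀ e, e ≠ g → ¬ (e = evw ∨ e = ea ∨ e = eb ∨ e = ec ∨ e = ed) →
        NC G S0 e := fun e he1 he2 => hncG e he2 (fun h => he1 (Sum.inl.inj h))
    by_cases haS : a ∈ S0
    · have hcS : c ∈ S0 := hacS.mp haS
      by_cases hbS : b ∈ S0
      · -- all four inside S0 : cut {g} around VS \ S0
        exfalso
        have hdS : d ∈ S0 := hbdS.mp hbS
        refine no_one_cut hconn hbridgeless (VS \ S0) g q p ⟨hqVS, hqS⟩ (fun hP => hP.2 hpS) ?_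
        intro e he
        by_cases h1 : e = evw
        · subst h1
          exact hNCout2 _ _ _ _ hevw (fun hP => ((hVS v).mp hP.1).1 rfl)
            (fun hP => ((hVS w).mp hP.1).2 rfl)
        by_cases h2 : e = ea
        · subst h2
          exact hNCout2 _ _ _ _ hea (fun hP => hP.2 haS) (fun hP => ((hVS v).mp hP.1).1 rfl)
        by_cases h3 : e = eb
        · subst h3
          exact hNCout2 _ _ _ _ heb (fun hP => hP.2 hbS) (fun hP => ((hVS v).mp hP.1).1 rfl)
        by_cases h4 : e = ec
        · subst h4
          exact hNCout2 _ _ _ _ hec (fun hP => hP.2 hcS) (fun hP => ((hVS w).mp hP.1).2 rfl)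
        by_cases h5 : e = ed
        · subst h5
          exact hNCout2 _ _ _ _ hed (fun hP => hP.2 hdS) (fun hP => ((hVS w).mp hP.1).2 rfl)
        · have hesp : ¬ (e = evw ∨ e = ea ∨ e = eb ∨ e = ec ∨ e = ed) := by tauto
          exact hdiffVS e (hnotsp e hesp) (hncG' e he hesp)
      · -- a, c ∈ S0 and b, d ∉ S0 : the desired configuration with S = S0
        have hdS : d ∉ S0 := fun h => hbS (hbdS.mpr h)
        refine ⟨g, S0, hgsp, hsub, haS, hcS, hbS, hdS, ?_, p, q, hends, hpS, hqS, hqVS⟩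
        intro e he
        have he1 : e ≠ g := fun h => he (Or.inl h)
        by_cases h1 : e = evw
        · subst h1
          exact hNCout2 _ _ _ _ hevw hvS0 hwS0
        by_cases h3 : e = eb
        · subst h3
          exact hNCout2 _ _ _ _ heb hbS hvS0
        by_cases h5 : e = ed
        · subst h5
          exact hNCout2 _ _ _ _ hed hdS hwS0
        · have hesp : ¬ (e = evw ∨ e = ea ∨ e = eb ∨ e = ec ∨ e = ed) := by tauto
          exact hncG' e he1 hesp
    · have hcS : c ∉ S0 := fun h => haS (hacS.mpr h)
      by_cases hbS : b ∈ S0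
      · -- b, d ∈ S0 and a, c ∉ S0 : desired configuration with S = VS \ S0
        have hdS : d ∈ S0 := hbdS.mp hbS
        refine ⟨g, VS \ S0, hgsp, Set.diff_subset, ⟨(hVS a).mpr ⟨hav, haw⟩, haS⟩,
          ⟨(hVS c).mpr ⟨hcv, hcw⟩, hcS⟩, fun h => h.2 hbS, fun h => h.2 hdS, ?_,
          q, p, hends.trans Sym2.eq_swap, ⟨hqVS, hqS⟩, fun h => h.2 hpS, hpVS⟩
        intro e he
        have he1 : e ≠ g := fun h => he (Or.inl h)
        by_cases h1 : e = evw
        · subst h1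
          exact hNCout2 _ _ _ _ hevw (fun hP => ((hVS v).mp hP.1).1 rfl)
            (fun hP => ((hVS w).mp hP.1).2 rfl)
        by_cases h3 : e = eb
        · subst h3
          exact hNCout2 _ _ _ _ heb (fun hP => hP.2 hbS) (fun hP => ((hVS v).mp hP.1).1 rfl)
        by_cases h5 : e = ed
        · subst h5
          exact hNCout2 _ _ _ _ hed (fun hP => hP.2 hdS) (fun hP => ((hVS w).mp hP.1).2 rfl)
        · have hesp : ¬ (e = evw ∨ e = ea ∨ e = eb ∨ e = ec ∨ e = ed) := by tauto
          exact hdiffVS e (hnotsp e hesp) (hncG' e he1 hesp)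
      · -- all four outside S0 : cut {g} around S0
        exfalso
        have hdS : d ∉ S0 := fun h => hbS (hbdS.mpr h)
        refine no_one_cut hconn hbridgeless S0 g p q hpS hqS ?_
        intro e he
        by_cases h1 : e = evw
        · subst h1
          exact hNCout2 _ _ _ _ hevw hvS0 hwS0
        by_cases h2 : e = ea
        · subst h2
          exact hNCout2 _ _ _ _ hea haS hvS0
        by_cases h3 : e = eb
        · subst h3
          exact hNCout2 _ _ _ _ heb hbS hvS0
        by_cases h4 : e = ec
        · subst h4
          exact hNCout2 _ _ _ _ hec hcS hwS0
        by_cases h5 : e = ed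
        · subst h5
          exact hNCout2 _ _ _ _ hed hdS hwS0
        · have hesp : ¬ (e = evw ∨ e = ea ∨ e = eb ∨ e = ec ∨ e = ed) := by tauto
          exact hncG' e he hesp
  · -- one of the new edges is the bridge : impossible
    exfalso
    have hncG' : ∀ e, ¬ (e = evw ∨ e = ea ∨ e = eb ∨ e = ec ∨ e = ed) → NC G S0 e :=
      fun e he => hncG e he (by simp)
    have haVS : a ∈ VS := (hVS a).mpr ⟨hav, haw⟩
    have hbVS : b ∈ VS := (hVS b).mpr ⟨hbv, hbw⟩
    have hcVS : c ∈ VS := (hVS c).mpr ⟨hcv, hcw⟩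
    have hdVS : d ∈ VS := (hVS d).mpr ⟨hdv, hdw⟩
    rcases hfin2 i with rfl | rfl
    · -- the edge {a,c} is the bridge
      rw [hH0, Sym2.mem_iff] at hp hq
      have hnc1 : NC H S0 (Sum.inr 1) := hnc _ ((hES _).mpr (Or.inr ⟨1, rfl⟩)) (by simp)
      have hbdS : b ∈ S0 ↔ d ∈ S0 :=
        hnc1 b (by rw [hH1]; exact Sym2.mem_mk_left _ _)
          d (by rw [hH1]; exact Sym2.mem_mk_right _ _)
      rcases hp with hp | hp <;> rcases hq with hq | hq
      · exact hqS (hq ▸ hp ▸ hpS)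
      · -- a ∈ S0, c ∉ S0
        rw [hp] at hpS
        rw [hq] at hqS
        by_cases hbS : b ∈ S0
        · have hdS : d ∈ S0 := hbdS.mp hbS
          refine no_one_cut hconn hbridgeless (VS \ S0) ec c a ⟨hcVS, hqS⟩
            (fun hP => hP.2 hpS) ?_
          intro e he
          by_cases h1 : e = evw
          · subst h1
            exact hNCout2 _ _ _ _ hevw (fun hP => ((hVS v).mp hP.1).1 rfl)
              (fun hP => ((hVS w).mp hP.1).2 rfl)
          by_cases h2 : e = ea
          · subst h2
            exact hNCout2 _ _ _ _ hea (fun hP => hP.2 hpS) (fun hP => ((hVS v).mp hP.1).1 rfl)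
          by_cases h3 : e = eb
          · subst h3
            exact hNCout2 _ _ _ _ heb (fun hP => hP.2 hbS) (fun hP => ((hVS v).mp hP.1).1 rfl)
          by_cases h5 : e = ed
          · subst h5
            exact hNCout2 _ _ _ _ hed (fun hP => hP.2 hdS) (fun hP => ((hVS w).mp hP.1).2 rfl)
          · have hesp : ¬ (e = evw ∨ e = ea ∨ e = eb ∨ e = ec ∨ e = ed) := by tauto
            exact hdiffVS e (hnotsp e hesp) (hncG' e hesp)
        · have hdS : d ∉ S0 := fun h => hbS (hbdS.mpr h)
          refine no_one_cut hconn hbridgeless S0 ea a c hpS hqS ?_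
          intro e he
          by_cases h1 : e = evw
          · subst h1
            exact hNCout2 _ _ _ _ hevw hvS0 hwS0
          by_cases h3 : e = eb
          · subst h3
            exact hNCout2 _ _ _ _ heb hbS hvS0
          by_cases h4 : e = ec
          · subst h4
            exact hNCout2 _ _ _ _ hec hqS hwS0
          by_cases h5 : e = ed
          · subst h5
            exact hNCout2 _ _ _ _ hed hdS hwS0
          · have hesp : ¬ (e = evw ∨ e = ea ∨ e = eb ∨ e = ec ∨ e = ed) := by tauto
            exact hncG' e hesp
      · -- c ∈ S0, a ∉ S0
        rw [hp] at hpS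
        rw [hq] at hqS
        by_cases hbS : b ∈ S0
        · have hdS : d ∈ S0 := hbdS.mp hbS
          refine no_one_cut hconn hbridgeless (VS \ S0) ea a c ⟨haVS, hqS⟩
            (fun hP => hP.2 hpS) ?_
          intro e he
          by_cases h1 : e = evw
          · subst h1
            exact hNCout2 _ _ _ _ hevw (fun hP => ((hVS v).mp hP.1).1 rfl)
              (fun hP => ((hVS w).mp hP.1).2 rfl)
          by_cases h3 : e = eb
          · subst h3
            exact hNCout2 _ _ _ _ heb (fun hP => hP.2 hbS) (fun hP => ((hVS v).mp hP.1).1 rfl)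
          by_cases h4 : e = ec
          · subst h4
            exact hNCout2 _ _ _ _ hec (fun hP => hP.2 hpS) (fun hP => ((hVS w).mp hP.1).2 rfl)
          by_cases h5 : e = ed
          · subst h5
            exact hNCout2 _ _ _ _ hed (fun hP => hP.2 hdS) (fun hP => ((hVS w).mp hP.1).2 rfl)
          · have hesp : ¬ (e = evw ∨ e = ea ∨ e = eb ∨ e = ec ∨ e = ed) := by tauto
            exact hdiffVS e (hnotsp e hesp) (hncG' e hesp)
        · have hdS : d ∉ S0 := fun h => hbS (hbdS.mpr h)
          refine no_one_cut hconn hbridgeless S0 ec c a hpS hqS ?_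
          intro e he
          by_cases h1 : e = evw
          · subst h1
            exact hNCout2 _ _ _ _ hevw hvS0 hwS0
          by_cases h2 : e = ea
          · subst h2
            exact hNCout2 _ _ _ _ hea hqS hvS0
          by_cases h3 : e = eb
          · subst h3
            exact hNCout2 _ _ _ _ heb hbS hvS0
          by_cases h5 : e = ed
          · subst h5
            exact hNCout2 _ _ _ _ hed hdS hwS0
          · have hesp : ¬ (e = evw ∨ e = ea ∨ e = eb ∨ e = ec ∨ e = ed) := by tauto
            exact hncG' e hesp
      · exact hqS (hq ▸ hp ▸ hpS)
    · -- the edge {b,d} is the bridge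
      rw [hH1, Sym2.mem_iff] at hp hq
      have hnc0 : NC H S0 (Sum.inr 0) := hnc _ ((hES _).mpr (Or.inr ⟨0, rfl⟩)) (by simp)
      have hacS : a ∈ S0 ↔ c ∈ S0 :=
        hnc0 a (by rw [hH0]; exact Sym2.mem_mk_left _ _)
          c (by rw [hH0]; exact Sym2.mem_mk_right _ _)
      rcases hp with hp | hp <;> rcases hq with hq | hq
      · exact hqS (hq ▸ hp ▸ hpS)
      · -- b ∈ S0, d ∉ S0
        rw [hp] at hpS
        rw [hq] at hqS
        by_cases haS : a ∈ S0
        · have hcS : c ∈ S0 := hacS.mp haS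
          refine no_one_cut hconn hbridgeless (VS \ S0) ed d b ⟨hdVS, hqS⟩
            (fun hP => hP.2 hpS) ?_
          intro e he
          by_cases h1 : e = evw
          · subst h1
            exact hNCout2 _ _ _ _ hevw (fun hP => ((hVS v).mp hP.1).1 rfl)
              (fun hP => ((hVS w).mp hP.1).2 rfl)
          by_cases h2 : e = ea
          · subst h2
            exact hNCout2 _ _ _ _ hea (fun hP => hP.2 haS) (fun hP => ((hVS v).mp hP.1).1 rfl)
          by_cases h3 : e = eb
          · subst h3
            exact hNCout2 _ _ _ _ heb (fun hP => hP.2 hpS) (fun hP => ((hVS v).mp hP.1).1 rfl)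
          by_cases h4 : e = ec
          · subst h4
            exact hNCout2 _ _ _ _ hec (fun hP => hP.2 hcS) (fun hP => ((hVS w).mp hP.1).2 rfl)
          · have hesp : ¬ (e = evw ∨ e = ea ∨ e = eb ∨ e = ec ∨ e = ed) := by tauto
            exact hdiffVS e (hnotsp e hesp) (hncG' e hesp)
        · have hcS : c ∉ S0 := fun h => haS (hacS.mpr h)
          refine no_one_cut hconn hbridgeless S0 eb b d hpS hqS ?_
          intro e he
          by_cases h1 : e = evw
          · subst h1
            exact hNCout2 _ _ _ _ hevw hvS0 hwS0
          by_cases h2 : e = ea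
          · subst h2
            exact hNCout2 _ _ _ _ hea haS hvS0
          by_cases h4 : e = ec
          · subst h4
            exact hNCout2 _ _ _ _ hec hcS hwS0
          by_cases h5 : e = ed
          · subst h5
            exact hNCout2 _ _ _ _ hed hqS hwS0
          · have hesp : ¬ (e = evw ∨ e = ea ∨ e = eb ∨ e = ec ∨ e = ed) := by tauto
            exact hncG' e hesp
      · -- d ∈ S0, b ∉ S0
        rw [hp] at hpS
        rw [hq] at hqS
        by_cases haS : a ∈ S0
        · have hcS : c ∈ S0 := hacS.mp haS
          refine no_one_cut hconn hbridgeless (VS \ S0) eb b d ⟨hbVS, hqS⟩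
            (fun hP => hP.2 hpS) ?_
          intro e he
          by_cases h1 : e = evw
          · subst h1
            exact hNCout2 _ _ _ _ hevw (fun hP => ((hVS v).mp hP.1).1 rfl)
              (fun hP => ((hVS w).mp hP.1).2 rfl)
          by_cases h2 : e = ea
          · subst h2
            exact hNCout2 _ _ _ _ hea (fun hP => hP.2 haS) (fun hP => ((hVS v).mp hP.1).1 rfl)
          by_cases h4 : e = ec
          · subst h4
            exact hNCout2 _ _ _ _ hec (fun hP => hP.2 hcS) (fun hP => ((hVS w).mp hP.1).2 rfl)
          by_cases h5 : e = ed
          · subst h5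
            exact hNCout2 _ _ _ _ hed (fun hP => hP.2 hpS) (fun hP => ((hVS w).mp hP.1).2 rfl)
          · have hesp : ¬ (e = evw ∨ e = ea ∨ e = eb ∨ e = ec ∨ e = ed) := by tauto
            exact hdiffVS e (hnotsp e hesp) (hncG' e hesp)
        · have hcS : c ∉ S0 := fun h => haS (hacS.mpr h)
          refine no_one_cut hconn hbridgeless S0 ed d b hpS hqS ?_
          intro e he
          by_cases h1 : e = evw
          · subst h1
            exact hNCout2 _ _ _ _ hevw hvS0 hwS0
          by_cases h2 : e = ea
          · subst h2
            exact hNCout2 _ _ _ _ hea haS hvS0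
          by_cases h3 : e = eb
          · subst h3
            exact hNCout2 _ _ _ _ heb hqS hvS0
          by_cases h4 : e = ec
          · subst h4
            exact hNCout2 _ _ _ _ hec hcS hwS0
          · have hesp : ¬ (e = evw ∨ e = ea ∨ e = eb ∨ e = ec ∨ e = ed) := by tauto
            exact hncG' e hesp
      · exact hqS (hq ▸ hp ▸ hpS)

end FrinkAux
namespace FrinkAux
open Multigraph

variable {V E : Type}

set_option maxHeartbeats 1600000 in
lemma final (G : Multigraph V E)
    (hconn : G.ConnectedOn Set.univ Set.univ)
    (hbridgeless : G.BridgelessOn Set.univ Set.univ)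
    (v w a b c d : V) (evw ea eb ec ed : E)
    (hvw : v ≠ w)
    (hevw : G.ends evw = s(v, w))
    (hea : G.ends ea = s(a, v)) (heb : G.ends eb = s(b, v))
    (hec : G.ends ec = s(c, w)) (hed : G.ends ed = s(d, w))
    (hav : a ≠ v) (haw : a ≠ w) (hbv : b ≠ v) (hbw : b ≠ w)
    (hcv : c ≠ v) (hcw : c ≠ w) (hdv : d ≠ v) (hdw : d ≠ w)
    (hnotsp : ∀ e, ¬ (e = evw ∨ e = ea ∨ e = eb ∨ e = ec ∨ e = ed) →
      ∀ x ∈ G.ends e, x ≠ v ∧ x ≠ w)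
    (S T : Set V)
    (hSVS : ∀ x ∈ S, x ≠ v ∧ x ≠ w) (hTVS : ∀ x ∈ T, x ≠ v ∧ x ≠ w)
    (haS : a ∈ S) (hcS : c ∈ S) (hbS : b ∉ S) (hdS : d ∉ S)
    (haT : a ∈ T) (hdT : d ∈ T) (hbT : b ∉ T) (hcT : c ∉ T)
    (g1 g2 : E)
    (hg1sp : ¬ (g1 = evw ∨ g1 = ea ∨ g1 = eb ∨ g1 = ec ∨ g1 = ed))
    (hg2sp : ¬ (g2 = evw ∨ g2 = ea ∨ g2 = eb ∨ g2 = ec ∨ g2 = ed))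
    (hncS : ∀ e, ¬ (e = g1 ∨ e = ea ∨ e = ec) → NC G S e)
    (hncT : ∀ e, ¬ (e = g2 ∨ e = ea ∨ e = ed) → NC G T e)
    (p1 q1 : V) (hg1 : G.ends g1 = s(p1, q1)) (hp1S : p1 ∈ S) (hq1S : q1 ∉ S)
    (hq1v : q1 ≠ v) (hq1w : q1 ≠ w)
    (p2 q2 : V) (hg2 : G.ends g2 = s(p2, q2)) (hp2T : p2 ∈ T) (hq2T : q2 ∉ T)
    (hq2v : q2 ≠ v) (hq2w : q2 ≠ w) : False := by
  have hNCout2 : ∀ (Z : Set V) (e : E) (x y : V), G.ends e = s(x, y) → x ∉ Z → y ∉ Z →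
      NC G Z e := by
    intro Z e x y he hx hy
    apply ncOut
    intro z hz
    rw [he, Sym2.mem_iff] at hz
    rcases hz with rfl | rfl
    · exact hx
    · exact hy
  have hNCin2 : ∀ (Z : Set V) (e : E) (x y : V), G.ends e = s(x, y) → x ∈ Z → y ∈ Z →
      NC G Z e := by
    intro Z e x y he hx hy
    apply ncIn
    intro z hz
    rw [he, Sym2.mem_iff] at hz
    rcases hz with rfl | rfl
    · exact hx
    · exact hy
  -- the four quadrant constraints
  have hC1 : p1 ∈ T ∨ p2 ∈ S := by
    by_contra hcon
    push_neg at hcon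
    obtain ⟨h1, h2⟩ := hcon
    refine no_one_cut hconn hbridgeless (S ∩ T) ea a b ⟨haS, haT⟩ (fun h => hbS h.1) ?_
    intro e he
    by_cases hx1 : e = ec
    · subst hx1
      exact hNCout2 _ _ _ _ hec (fun h => hcT h.2) (fun h => (hSVS w h.1).2 rfl)
    by_cases hx2 : e = ed
    · subst hx2
      exact hNCout2 _ _ _ _ hed (fun h => hdS h.1) (fun h => (hSVS w h.1).2 rfl)
    by_cases hx3 : e = g1
    · subst hx3
      exact hNCout2 _ _ _ _ hg1 (fun h => h1 h.2) (fun h => hq1S h.1)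
    by_cases hx4 : e = g2
    · subst hx4
      exact hNCout2 _ _ _ _ hg2 (fun h => h2 h.1) (fun h => hq2T h.2)
    · exact nc_inter (hncS e (by tauto)) (hncT e (by tauto))
  have hC2 : p1 ∉ T ∨ q2 ∈ S := by
    by_contra hcon
    push_neg at hcon
    obtain ⟨h1, h2⟩ := hcon
    refine no_one_cut hconn hbridgeless (S ∩ Tᶜ) ec c a ⟨hcS, hcT⟩ (fun h => h.2 haT) ?_
    intro e he
    by_cases hx1 : e = ea
    · subst hx1
      exact hNCout2 _ _ _ _ hea (fun h => h.2 haT) (fun h => (hSVS v h.1).1 rfl)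
    by_cases hx2 : e = ed
    · subst hx2
      exact hNCout2 _ _ _ _ hed (fun h => hdS h.1) (fun h => (hSVS w h.1).2 rfl)
    by_cases hx3 : e = g1
    · subst hx3
      exact hNCout2 _ _ _ _ hg1 (fun h => h.2 h1) (fun h => hq1S h.1)
    by_cases hx4 : e = g2
    · subst hx4
      exact hNCout2 _ _ _ _ hg2 (fun h => h.2 hp2T) (fun h => h2 h.1)
    · exact nc_inter (hncS e (by tauto)) (nc_compl (hncT e (by tauto)))
  have hC3 : q1 ∈ T ∨ p2 ∉ S := by
    by_contra hcon
    push_neg at hcon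
    obtain ⟨h1, h2⟩ := hcon
    refine no_one_cut hconn hbridgeless (T ∩ Sᶜ) ed d a ⟨hdT, hdS⟩ (fun h => h.2 haS) ?_
    intro e he
    by_cases hx1 : e = ea
    · subst hx1
      exact hNCout2 _ _ _ _ hea (fun h => h.2 haS) (fun h => (hTVS v h.1).1 rfl)
    by_cases hx2 : e = ec
    · subst hx2
      exact hNCout2 _ _ _ _ hec (fun h => hcT h.1) (fun h => (hTVS w h.1).2 rfl)
    by_cases hx3 : e = g1
    · subst hx3
      exact hNCout2 _ _ _ _ hg1 (fun h => h.2 hp1S) (fun h => h1 h.1)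
    by_cases hx4 : e = g2
    · subst hx4
      exact hNCout2 _ _ _ _ hg2 (fun h => h.2 h2) (fun h => hq2T h.1)
    · exact nc_inter (hncT e (by tauto)) (nc_compl (hncS e (by tauto)))
  have hC4 : q1 ∉ T ∨ q2 ∉ S := by
    by_contra hcon
    push_neg at hcon
    obtain ⟨h1, h2⟩ := hcon
    refine no_one_cut hconn hbridgeless (Sᶜ ∩ (Tᶜ ∩ {x | x ≠ v ∧ x ≠ w})) eb b a
      ⟨hbS, hbT, hbv, hbw⟩ (fun h => h.1 haS) ?_
    intro e he
    by_cases hx1 : e = evw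
    · subst hx1
      exact hNCout2 _ _ _ _ hevw (fun h => h.2.2.1 rfl) (fun h => h.2.2.2 rfl)
    by_cases hx2 : e = ea
    · subst hx2
      exact hNCout2 _ _ _ _ hea (fun h => h.1 haS) (fun h => h.2.2.1 rfl)
    by_cases hx3 : e = ec
    · subst hx3
      exact hNCout2 _ _ _ _ hec (fun h => h.1 hcS) (fun h => h.2.2.2 rfl)
    by_cases hx4 : e = ed
    · subst hx4
      exact hNCout2 _ _ _ _ hed (fun h => h.2.1 hdT) (fun h => h.2.2.2 rfl)
    by_cases hx5 : e = g1
    · subst hx5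
      exact hNCout2 _ _ _ _ hg1 (fun h => h.1 hp1S) (fun h => h.2.1 h1)
    by_cases hx6 : e = g2
    · subst hx6
      exact hNCout2 _ _ _ _ hg2 (fun h => h.2.1 hp2T) (fun h => h.1 h2)
    · have hesp : ¬ (e = evw ∨ e = ea ∨ e = eb ∨ e = ec ∨ e = ed) := by tauto
      exact nc_inter (nc_compl (hncS e (by tauto)))
        (nc_inter (nc_compl (hncT e (by tauto))) (ncIn (fun x hx => hnotsp e hesp x hx)))
  -- now the two final cases
  by_cases hP : p1 ∈ T
  · -- case A
    have hU : q2 ∈ S := hC2.resolve_left (fun h => h hP)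
    have hQ : q1 ∉ T := hC4.resolve_right (fun h => h hU)
    have hR : p2 ∉ S := hC3.resolve_left hQ
    refine no_one_cut hconn hbridgeless
      ((S ∩ T) ∪ ((Sᶜ ∩ (Tᶜ ∩ {x | x ≠ v ∧ x ≠ w})) ∪ {v})) evw v c
      (Or.inr (Or.inr rfl)) ?_ ?_
    · rintro (h | h | h)
      · exact hcT h.2
      · exact h.1 hcS
      · exact hcv h
    intro e he
    by_cases hx1 : e = ea
    · subst hx1
      exact hNCin2 _ _ _ _ hea (Or.inl ⟨haS, haT⟩) (Or.inr (Or.inr rfl))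
    by_cases hx2 : e = eb
    · subst hx2
      exact hNCin2 _ _ _ _ heb (Or.inr (Or.inl ⟨hbS, hbT, hbv, hbw⟩)) (Or.inr (Or.inr rfl))
    by_cases hx3 : e = ec
    · subst hx3
      refine hNCout2 _ _ _ _ hec ?_ ?_
      · rintro (h | h | h)
        · exact hcT h.2
        · exact h.1 hcS
        · exact hcv h
      · rintro (h | h | h)
        · exact (hSVS w h.1).2 rfl
        · exact h.2.2.2 rfl
        · exact hvw h.symm
    by_cases hx4 : e = ed
    · subst hx4
      refine hNCout2 _ _ _ _ hed ?_ ?_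
      · rintro (h | h | h)
        · exact hdS h.1
        · exact h.2.1 hdT
        · exact hdv h
      · rintro (h | h | h)
        · exact (hSVS w h.1).2 rfl
        · exact h.2.2.2 rfl
        · exact hvw h.symm
    by_cases hx5 : e = g1
    · subst hx5
      exact hNCin2 _ _ _ _ hg1 (Or.inl ⟨hp1S, hP⟩) (Or.inr (Or.inl ⟨hq1S, hQ, hq1v, hq1w⟩))
    by_cases hx6 : e = g2
    · subst hx6
      refine hNCout2 _ _ _ _ hg2 ?_ ?_
      · rintro (h | h | h)
        · exact hR h.1
        · exact h.2.1 hp2T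
        · exact (hTVS p2 hp2T).1 h
      · rintro (h | h | h)
        · exact hq2T h.2
        · exact h.1 hU
        · exact hq2v h
    · have hesp : ¬ (e = evw ∨ e = ea ∨ e = eb ∨ e = ec ∨ e = ed) := by tauto
      refine nc_union (nc_inter (hncS e (by tauto)) (hncT e (by tauto)))
        (nc_union (nc_inter (nc_compl (hncS e (by tauto)))
          (nc_inter (nc_compl (hncT e (by tauto))) (ncIn (fun x hx => hnotsp e hesp x hx))))
          (ncOut (fun x hx h => (hnotsp e hesp x hx).1 h)))
  · -- case B
    have hR : p2 ∈ S := hC1.resolve_left hP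
    have hQ : q1 ∈ T := hC3.resolve_right (fun h => h hR)
    have hU : q2 ∉ S := hC4.resolve_left (fun h => h hQ)
    refine no_one_cut hconn hbridgeless
      ((S ∩ Tᶜ) ∪ ((T ∩ Sᶜ) ∪ {w})) evw w a
      (Or.inr (Or.inr rfl)) ?_ ?_
    · rintro (h | h | h)
      · exact h.2 haT
      · exact h.2 haS
      · exact haw h
    intro e he
    by_cases hx1 : e = ea
    · subst hx1
      refine hNCout2 _ _ _ _ hea ?_ ?_
      · rintro (h | h | h)
        · exact h.2 haT
        · exact h.2 haS
        · exact haw h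
      · rintro (h | h | h)
        · exact (hSVS v h.1).1 rfl
        · exact (hTVS v h.1).1 rfl
        · exact hvw h
    by_cases hx2 : e = eb
    · subst hx2
      refine hNCout2 _ _ _ _ heb ?_ ?_
      · rintro (h | h | h)
        · exact hbS h.1
        · exact hbT h.1
        · exact hbw h
      · rintro (h | h | h)
        · exact (hSVS v h.1).1 rfl
        · exact (hTVS v h.1).1 rfl
        · exact hvw h
    by_cases hx3 : e = ec
    · subst hx3
      exact hNCin2 _ _ _ _ hec (Or.inl ⟨hcS, hcT⟩) (Or.inr (Or.inr rfl))
    by_cases hx4 : e = ed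
    · subst hx4
      exact hNCin2 _ _ _ _ hed (Or.inr (Or.inl ⟨hdT, hdS⟩)) (Or.inr (Or.inr rfl))
    by_cases hx5 : e = g1
    · subst hx5
      exact hNCin2 _ _ _ _ hg1 (Or.inl ⟨hp1S, hP⟩) (Or.inr (Or.inl ⟨hQ, hq1S⟩))
    by_cases hx6 : e = g2
    · subst hx6
      refine hNCout2 _ _ _ _ hg2 ?_ ?_
      · rintro (h | h | h)
        · exact h.2 hp2T
        · exact h.2 hR
        · exact (hTVS p2 hp2T).2 h
      · rintro (h | h | h)
        · exact hU h.1
        · exact hq2T h.1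
        · exact hq2w h
    · have hesp : ¬ (e = evw ∨ e = ea ∨ e = eb ∨ e = ec ∨ e = ed) := by tauto
      refine nc_union (nc_inter (hncS e (by tauto)) (nc_compl (hncT e (by tauto))))
        (nc_union (nc_inter (hncT e (by tauto)) (nc_compl (hncS e (by tauto))))
          (ncOut (fun x hx h => (hnotsp e hesp x hx).2 h)))

end FrinkAux
namespace FrinkAux
open Multigraph

variable {V E : Type}

lemma three_edges [Fintype E] (G : Multigraph V E) (v : V) (hdeg : G.degOn Set.univ v = 3)
    (e1 e2 e3 : E) (h12 : e1 ≠ e2) (h13 : e1 ≠ e3) (h23 : e2 ≠ e3)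
    (hm1 : v ∈ G.ends e1) (hm2 : v ∈ G.ends e2) (hm3 : v ∈ G.ends e3) :
    (∀ e, v ∈ G.ends e → e = e1 ∨ e = e2 ∨ e = e3) ∧ (∀ e, G.ends e ≠ s(v, v)) := by
  simp only [Multigraph.degOn, Set.sep_univ] at hdeg
  constructor
  · intro e he
    by_contra hcon
    push_neg at hcon
    obtain ⟨hne1, hne2, hne3⟩ := hcon
    have hsub : ({e, e1, e2, e3} : Set E) ⊆ {e' | v ∈ G.ends e'} := by
      rintro e' (rfl | rfl | rfl | rfl) <;> assumption
    have hcard : ({e, e1, e2, e3} : Set E).ncard = 4 := by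
      rw [Set.ncard_insert_of_notMem (by simp [hne1, hne2, hne3]),
        Set.ncard_insert_of_notMem (by simp [h12, h13]),
        Set.ncard_insert_of_notMem (by simp [h23]), Set.ncard_singleton]
    have hle : 4 ≤ {e' | v ∈ G.ends e'}.ncard := by
      rw [← hcard]
      exact Set.ncard_le_ncard hsub (Set.toFinite _)
    omega
  · intro e he
    have h1 : 0 < {e' | G.ends e' = s(v, v)}.ncard :=
      (Set.ncard_pos (Set.toFinite _)).mpr ⟨e, he⟩
    have hsub : ({e1, e2, e3} : Set E) ⊆ {e' | v ∈ G.ends e'} := by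
      rintro e' (rfl | rfl | rfl) <;> assumption
    have hcard : ({e1, e2, e3} : Set E).ncard = 3 := by
      rw [Set.ncard_insert_of_notMem (by simp [h12, h13]),
        Set.ncard_insert_of_notMem (by simp [h23]), Set.ncard_singleton]
    have hle : 3 ≤ {e' | v ∈ G.ends e'}.ncard := by
      rw [← hcard]
      exact Set.ncard_le_ncard hsub (Set.toFinite _)
    omega

end FrinkAux

open FrinkAux

set_option maxHeartbeats 2000000

/-- **Frink's theorem.** Let `G` be a connected bridgeless cubic multigraph and
`{v,w}` a single edge of `G` with other incident edges `{a,v}`, `{b,v}`,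
`{c,w}`, `{d,w}`. Let `H1` be obtained from `G` by deleting `v` and `w` with
all incident edges and adding the two new edges `{a,c}` and `{b,d}`, and `H2`
likewise with new edges `{a,d}` and `{b,c}`. Then both `H1` and `H2` are
cubic, and at least one of them is bridgeless. -/
theorem frink {V E : Type} [Fintype V] [Fintype E] (G : Multigraph V E)
    (hconn : G.ConnectedOn Set.univ Set.univ)
    (hcubic : G.CubicOn Set.univ Set.univ)
    (hbridgeless : G.BridgelessOn Set.univ Set.univ)
    (v w a b c d : V) (evw ea eb ec ed : E)
    (hvw : v ≠ w)
    (hevw : G.ends evw = s(v, w))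
    (hsingle : ∀ e : E, G.ends e = s(v, w) → e = evw)
    (hea : G.ends ea = s(a, v)) (heb : G.ends eb = s(b, v))
    (hec : G.ends ec = s(c, w)) (hed : G.ends ed = s(d, w))
    (hab : ea ≠ eb) (hcd : ec ≠ ed)
    (ha : ea ≠ evw) (hb : eb ≠ evw) (hc : ec ≠ evw) (hd : ed ≠ evw) :
    let H1 : Multigraph V (E ⊕ Fin 2) := ⟨Sum.elim G.ends ![s(a, c), s(b, d)]⟩
    let H2 : Multigraph V (E ⊕ Fin 2) := ⟨Sum.elim G.ends ![s(a, d), s(b, c)]⟩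
    let VS : Set V := {x | x ≠ v ∧ x ≠ w}
    let ES : Set (E ⊕ Fin 2) :=
      Sum.inl '' {e | e ∉ ({evw, ea, eb, ec, ed} : Set E)} ∪ Set.range Sum.inr
    (H1.CubicOn VS ES ∧ H2.CubicOn VS ES) ∧
      (H1.BridgelessOn VS ES ∨ H2.BridgelessOn VS ES) := by
  
  intro H1 H2 VS ES
  -- structure of the edges at v and w
  obtain ⟨hvE, hvloop⟩ := three_edges G v (hcubic.2 v trivial) evw ea eb
    (Ne.symm ha) (Ne.symm hb) hab
    (by rw [hevw]; exact Sym2.mem_mk_left _ _)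
    (by rw [hea]; exact Sym2.mem_mk_right _ _)
    (by rw [heb]; exact Sym2.mem_mk_right _ _)
  obtain ⟨hwE, hwloop⟩ := three_edges G w (hcubic.2 w trivial) evw ec ed
    (Ne.symm hc) (Ne.symm hd) hcd
    (by rw [hevw]; exact Sym2.mem_mk_right _ _)
    (by rw [hec]; exact Sym2.mem_mk_right _ _)
    (by rw [hed]; exact Sym2.mem_mk_right _ _)
  have hav : a ≠ v := fun h => hvloop ea (by rw [hea, h])
  have hbv : b ≠ v := fun h => hvloop eb (by rw [heb, h])
  have hcw : c ≠ w := fun h => hwloop ec (by rw [hec, h])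
  have hdw : d ≠ w := fun h => hwloop ed (by rw [hed, h])
  have haw : a ≠ w := fun h => ha (hsingle ea (by rw [hea, h]; exact Sym2.eq_swap))
  have hbw : b ≠ w := fun h => hb (hsingle eb (by rw [heb, h]; exact Sym2.eq_swap))
  have hcv : c ≠ v := fun h => hc (hsingle ec (by rw [hec, h]))
  have hdv : d ≠ v := fun h => hd (hsingle ed (by rw [hed, h]))
  have hac : ea ≠ ec := by
    intro h
    rw [h, hec] at hea
    rw [Sym2.eq_iff] at hea
    rcases hea with ⟨-, h2⟩ | ⟨h2, -⟩
    · exact hvw h2.symm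
    · exact hcv h2
  have had : ea ≠ ed := by
    intro h
    rw [h, hed] at hea
    rw [Sym2.eq_iff] at hea
    rcases hea with ⟨-, h2⟩ | ⟨h2, -⟩
    · exact hvw h2.symm
    · exact hdv h2
  have hbc : eb ≠ ec := by
    intro h
    rw [h, hec] at heb
    rw [Sym2.eq_iff] at heb
    rcases heb with ⟨-, h2⟩ | ⟨h2, -⟩
    · exact hvw h2.symm
    · exact hcv h2
  have hbd : eb ≠ ed := by
    intro h
    rw [h, hed] at heb
    rw [Sym2.eq_iff] at heb
    rcases heb with ⟨-, h2⟩ | ⟨h2, -⟩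
    · exact hvw h2.symm
    · exact hdv h2
  have hVS : ∀ x, x ∈ VS ↔ x ≠ v ∧ x ≠ w := fun x => Iff.rfl
  have hwE' : ∀ e, w ∈ G.ends e → e = evw ∨ e = ed ∨ e = ec := by
    intro e he
    rcases hwE e he with h | h | h
    · exact Or.inl h
    · exact Or.inr (Or.inr h)
    · exact Or.inr (Or.inl h)
  have hnotsp : ∀ e, ¬ (e = evw ∨ e = ea ∨ e = eb ∨ e = ec ∨ e = ed) →
      ∀ x ∈ G.ends e, x ≠ v ∧ x ≠ w := by
    intro e he x hx
    constructor
    · rintro rfl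
      rcases hvE e hx with rfl | rfl | rfl
      · exact he (Or.inl rfl)
      · exact he (Or.inr (Or.inl rfl))
      · exact he (Or.inr (Or.inr (Or.inl rfl)))
    · rintro rfl
      rcases hwE e hx with rfl | rfl | rfl
      · exact he (Or.inl rfl)
      · exact he (Or.inr (Or.inr (Or.inr (Or.inl rfl))))
      · exact he (Or.inr (Or.inr (Or.inr (Or.inr rfl))))
  have hH10 : H1.ends (Sum.inr 0) = s(a, c) := rfl
  have hH11 : H1.ends (Sum.inr 1) = s(b, d) := rfl
  have hH20 : H2.ends (Sum.inr 0) = s(a, d) := rfl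
  have hH21 : H2.ends (Sum.inr 1) = s(b, c) := rfl
  have hHl1 : ∀ e, H1.ends (Sum.inl e) = G.ends e := fun _ => rfl
  have hHl2 : ∀ e, H2.ends (Sum.inl e) = G.ends e := fun _ => rfl
  have hsetswap : ({evw, ea, eb, ed, ec} : Set E) = {evw, ea, eb, ec, ed} := by
    ext e
    simp only [Set.mem_insert_iff, Set.mem_singleton_iff]
    tauto
  have hES2 : ES = Sum.inl '' {e | e ∉ ({evw, ea, eb, ed, ec} : Set E)} ∪ Set.range Sum.inr := by
    rw [hsetswap]
  have hcub1 : H1.CubicOn VS ES :=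
    cubic_part G hcubic v w a b c d evw ea eb ec ed hevw hea heb hec hed hab hcd
      ha hb hc hd hac had hbc hbd hav haw hbv hbw hcv hcw hdv hdw hvE hwE
      H1 hH10 hH11 hHl1 VS ES hVS rfl
  have hcub2 : H2.CubicOn VS ES :=
    cubic_part G hcubic v w a b d c evw ea eb ed ec hevw hea heb hed hec hab (Ne.symm hcd)
      ha hb hd hc had hac hbd hbc hav haw hbv hbw hdv hdw hcv hcw hvE hwE'
      H2 hH20 hH21 hHl2 VS ES hVS hES2
  refine ⟨⟨hcub1, hcub2⟩, ?_⟩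
  by_contra hcon
  push_neg at hcon
  obtain ⟨hbr1', hbr2'⟩ := hcon
  simp only [Multigraph.BridgelessOn, not_forall, not_not] at hbr1' hbr2'
  obtain ⟨f1, hbr1⟩ := hbr1'
  obtain ⟨f2, hbr2⟩ := hbr2'
  have hESiff : ∀ e', e' ∈ ES ↔
      ((∃ e, (¬ (e = evw ∨ e = ea ∨ e = eb ∨ e = ec ∨ e = ed)) ∧ e' = Sum.inl e) ∨
       ∃ i, e' = Sum.inr i) := by
    intro e'
    constructor
    · rintro (⟨e, he, rfl⟩ | ⟨i, rfl⟩)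
      · exact Or.inl ⟨e, fun h => he (by simpa using h), rfl⟩
      · exact Or.inr ⟨i, rfl⟩
    · rintro (⟨e, he, rfl⟩ | ⟨i, rfl⟩)
      · exact Or.inl ⟨e, fun h => he (by simpa using h), rfl⟩
      · exact Or.inr ⟨i, rfl⟩
  have hESiff2 : ∀ e', e' ∈ ES ↔
      ((∃ e, (¬ (e = evw ∨ e = ea ∨ e = eb ∨ e = ed ∨ e = ec)) ∧ e' = Sum.inl e) ∨
       ∃ i, e' = Sum.inr i) := by
    intro e'
    rw [hESiff e']
    constructor
    · rintro (⟨e, he, rfl⟩ | h)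
      · exact Or.inl ⟨e, by tauto, rfl⟩
      · exact Or.inr h
    · rintro (⟨e, he, rfl⟩ | h)
      · exact Or.inl ⟨e, by tauto, rfl⟩
      · exact Or.inr h
  obtain ⟨g1, S, hg1sp, hSsub, haS, hcS, hbS, hdS, hncS, p1, q1, hg1e, hp1S, hq1S, hq1VS⟩ :=
    extract G hconn hbridgeless v w a b c d evw ea eb ec ed hevw hea heb hec hed
      hav haw hbv hbw hcv hcw hdv hdw hvE hwE H1 hH10 hH11 hHl1 VS ES hVS hESiff f1 hbr1
  obtain ⟨g2, T, hg2sp, hTsub, haT, hdT, hbT, hcT, hncT, p2, q2, hg2e, hp2T, hq2T, hq2VS⟩ :=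
    extract G hconn hbridgeless v w a b d c evw ea eb ed ec hevw hea heb hed hec
      hav haw hbv hbw hdv hdw hcv hcw hvE hwE' H2 hH20 hH21 hHl2 VS ES hVS hESiff2 f2 hbr2
  have hg2sp' : ¬ (g2 = evw ∨ g2 = ea ∨ g2 = eb ∨ g2 = ec ∨ g2 = ed) := by
    rintro (h | h | h | h | h)
    · exact hg2sp (Or.inl h)
    · exact hg2sp (Or.inr (Or.inl h))
    · exact hg2sp (Or.inr (Or.inr (Or.inl h)))
    · exact hg2sp (Or.inr (Or.inr (Or.inr (Or.inr h))))
    · exact hg2sp (Or.inr (Or.inr (Or.inr (Or.inl h))))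
  exact final G hconn hbridgeless v w a b c d evw ea eb ec ed hvw hevw hea heb hec hed
    hav haw hbv hbw hcv hcw hdv hdw hnotsp S T
    (fun x hx => (hVS x).mp (hSsub hx)) (fun x hx => (hVS x).mp (hTsub hx))
    haS hcS hbS hdS haT hdT hbT hcT g1 g2 hg1sp hg2sp' hncS hncT
    p1 q1 hg1e hp1S hq1S ((hVS q1).mp hq1VS).1 ((hVS q1).mp hq1VS).2
    p2 q2 hg2e hp2T hq2T ((hVS q2).mp hq2VS).1 ((hVS q2).mp hq2VS).2
end

section
/- Every bridgeless cubic multigraph with more than two vertices has a single edge, i.e., a pair of adjacent vertices v,w joined by exactly one edge. -/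
/-- Every (connected) bridgeless cubic multigraph with more than two vertices
has a single edge: a pair of adjacent vertices `v ≠ w` joined by exactly one
edge. -/
theorem exists_single_edge {V E : Type} [Fintype V] [Fintype E] (G : Multigraph V E)
    (hconn : G.ConnectedOn Set.univ Set.univ)
    (hcubic : G.CubicOn Set.univ Set.univ)
    (hbridgeless : G.BridgelessOn Set.univ Set.univ)
    (hcard : 2 < Fintype.card V) :
    ∃ (v w : V) (e : E), v ≠ w ∧ G.ends e = s(v, w) ∧
      ∀ e' : E, G.ends e' = s(v, w) → e' = e := by
  classical
  by_contra hno
  push_neg at hno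
  have hdeg : ∀ v : V,
      ({e : E | v ∈ G.ends e}).ncard + ({e : E | G.ends e = s(v, v)}).ncard = 3 := by
    intro v
    have h := hcubic.2 v (Set.mem_univ v)
    simpa [Multigraph.degOn, Set.sep_univ] using h
  -- Step 1: no loops
  have hnoloop : ∀ (v : V) (e : E), G.ends e ≠ s(v, v) := by
    intro v e0 he0
    have hsub : {e : E | G.ends e = s(v, v)} ⊆ {e : E | v ∈ G.ends e} := by
      intro e he
      simp only [Set.mem_setOf_eq] at *
      rw [he]; exact Sym2.mem_mk_left v v
    have hba : ({e : E | G.ends e = s(v, v)}).ncard ≤ ({e : E | v ∈ G.ends e}).ncard :=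
      Set.ncard_le_ncard hsub (Set.toFinite _)
    have hb1 : 1 ≤ ({e : E | G.ends e = s(v, v)}).ncard := by
      have h1 : ({e : E | G.ends e = s(v, v)}).Nonempty := ⟨e0, he0⟩
      have := (Set.ncard_pos (Set.toFinite _)).mpr h1
      omega
    have hdv := hdeg v
    have hb : ({e : E | G.ends e = s(v, v)}).ncard = 1 := by omega
    have ha : ({e : E | v ∈ G.ends e}).ncard = 2 := by omega
    obtain ⟨l, hl⟩ := Set.ncard_eq_one.mp hb
    have hle0 : l = e0 := by
      have : e0 ∈ ({l} : Set E) := hl ▸ he0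
      simpa using this.symm
    rw [hle0] at hl
    obtain ⟨x, y, hxy, hset⟩ := Set.ncard_eq_two.mp ha
    have he0mem : e0 ∈ ({x, y} : Set E) := by
      rw [← hset]; exact hsub he0
    obtain ⟨f, hfe0, hfeq⟩ : ∃ f, f ≠ e0 ∧ ({x, y} : Set E) = {e0, f} := by
      rcases he0mem with h | h
      · exact ⟨y, fun hy => hxy ((hy.trans h).symm), by rw [h]⟩
      · simp only [Set.mem_singleton_iff] at h
        exact ⟨x, fun hx => hxy (hx.trans h), by rw [h]; exact Set.pair_comm x y⟩
    rw [hfeq] at hset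
    have hfinc : f ∈ {e : E | v ∈ G.ends e} := by
      rw [hset]; exact Set.mem_insert_of_mem _ rfl
    have hfnl : G.ends f ≠ s(v, v) := by
      intro h
      have : f ∈ ({e0} : Set E) := hl ▸ h
      exact hfe0 (by simpa using this)
    obtain ⟨w, hw⟩ := Sym2.mem_iff_exists.mp hfinc
    have hwv : w ≠ v := by rintro rfl; exact hfnl hw
    refine hbridgeless f ⟨Set.mem_univ f, v, Set.mem_univ v, w, Set.mem_univ w,
      Relation.ReflTransGen.single ⟨f, Set.mem_univ f, hw⟩, ?_⟩
    intro hlink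
    have key : ∀ z, G.LinkedOn (Set.univ \ {f}) v z → z = v := by
      intro z hz
      have hz' : Relation.ReflTransGen (G.Step (Set.univ \ {f})) v z := hz
      clear hz
      induction hz' with
      | refl => rfl
      | tail h1 h2 ih =>
        obtain ⟨e, he, hee⟩ := h2
        rw [ih] at hee
        have hef : e ≠ f := fun h => he.2 (by simp [h])
        have hmem : e ∈ {e' : E | v ∈ G.ends e'} := by
          simp only [Set.mem_setOf_eq, hee]
          exact Sym2.mem_mk_left _ _
        rw [hset] at hmem
        have hee0 : e = e0 := by
          rcases hmem with h | h
          · exact h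
          · exact absurd (by simpa using h) hef
        rw [hee0, he0] at hee
        rcases Sym2.eq_iff.mp hee with ⟨_, h2⟩ | ⟨h2, _⟩
        · exact h2.symm
        · exact h2.symm
    exact hwv (key w hlink)
  -- incidence sets have 3 elements
  have hSv : ∀ v : V, ({e : E | v ∈ G.ends e}).ncard = 3 := by
    intro v
    have h := hdeg v
    have hempty : ({e : E | G.ends e = s(v, v)}) = ∅ := by
      ext e; simp [hnoloop v e]
    rw [hempty] at h
    simpa using h
  -- all edges at a vertex have the same endpoints
  have hsame : ∀ (v : V) (f g : E), v ∈ G.ends f → v ∈ G.ends g → G.ends f = G.ends g := by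
    intro v f g hf hg
    obtain ⟨w, hw⟩ := Sym2.mem_iff_exists.mp hf
    obtain ⟨u, hu⟩ := Sym2.mem_iff_exists.mp hg
    have hwv : w ≠ v := by rintro rfl; exact hnoloop w f hw
    have huv : u ≠ v := by rintro rfl; exact hnoloop u g hu
    by_cases hwu : w = u
    · rw [hw, hu, hwu]
    obtain ⟨f', hf', hff'⟩ := hno v w f (Ne.symm hwv) hw
    obtain ⟨g', hg', hgg'⟩ := hno v u g (Ne.symm huv) hu
    have hends : s(v, w) ≠ s(v, u) := by
      intro h
      rcases Sym2.eq_iff.mp h with ⟨_, h2⟩ | ⟨h1, _⟩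
      · exact hwu h2
      · exact huv h1.symm
    have hfg : f ≠ g := by rintro rfl; exact hends (hw.symm.trans hu)
    have hfg' : f ≠ g' := by rintro rfl; exact hends (hw.symm.trans hg')
    have hf'g : f' ≠ g := by rintro rfl; exact hends (hf'.symm.trans hu)
    have hf'g' : f' ≠ g' := by rintro rfl; exact hends (hf'.symm.trans hg')
    have hsub : ({f, f', g, g'} : Set E) ⊆ {e : E | v ∈ G.ends e} := by
      rintro e (rfl | rfl | rfl | rfl)
      · exact hf
      · simp only [Set.mem_setOf_eq, hf']; exact Sym2.mem_mk_left _ _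
      · exact hg
      · simp only [Set.mem_setOf_eq, hg']; exact Sym2.mem_mk_left _ _
    have h4 : ({f, f', g, g'} : Set E).ncard = 4 := by
      rw [Set.ncard_insert_of_notMem (by simp [hff'.symm, hfg, hfg']) (Set.toFinite _),
        Set.ncard_insert_of_notMem (by simp [hf'g, hf'g']) (Set.toFinite _),
        Set.ncard_insert_of_notMem (by simp [hgg'.symm]) (Set.toFinite _),
        Set.ncard_singleton]
    have hle := Set.ncard_le_ncard hsub (Set.toFinite _)
    rw [h4, hSv v] at hle
    omega
  -- pick a vertex v and an edge e at v
  have hVpos : 0 < Fintype.card V := by omega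
  obtain ⟨v⟩ := Fintype.card_pos_iff.mp hVpos
  have hvne : ({e : E | v ∈ G.ends e}).Nonempty := by
    rw [← Set.ncard_pos (Set.toFinite _), hSv v]; omega
  obtain ⟨e, he⟩ := hvne
  obtain ⟨w, hw⟩ := Sym2.mem_iff_exists.mp he
  have hwv : w ≠ v := by rintro rfl; exact hnoloop w e hw
  -- the component of v is {v, w}
  have key2 : ∀ x z, x ∈ ({v, w} : Set V) → G.LinkedOn Set.univ x z → z ∈ ({v, w} : Set V) := by
    intro x z hx hz
    have hz' : Relation.ReflTransGen (G.Step Set.univ) x z := hz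
    clear hz
    induction hz' with
    | refl => exact hx
    | tail h1 h2 ih =>
      rename_i b c
      obtain ⟨e1, _, he1⟩ := h2
      have hbe : b ∈ G.ends e := by
        rcases ih with rfl | hb
        · exact he
        · simp only [Set.mem_singleton_iff] at hb
          rw [hb, hw]; exact Sym2.mem_mk_right _ _
      have hbe1 : b ∈ G.ends e1 := by rw [he1]; exact Sym2.mem_mk_left _ _
      have heq : G.ends e1 = G.ends e := hsame b e1 e hbe1 hbe
      rw [he1, hw] at heq
      rcases Sym2.eq_iff.mp heq with ⟨_, rfl⟩ | ⟨_, rfl⟩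
      · exact Set.mem_insert_of_mem _ rfl
      · exact Set.mem_insert _ _
  -- get a third vertex
  obtain ⟨u, huv, huw⟩ : ∃ u : V, u ≠ v ∧ u ≠ w := by
    by_contra h
    push_neg at h
    have hsub : (Finset.univ : Finset V) ⊆ {v, w} := by
      intro u _
      simp only [Finset.mem_insert, Finset.mem_singleton]
      by_cases hu : u = v
      · exact Or.inl hu
      · exact Or.inr (h u hu)
    have hle := Finset.card_le_card hsub
    rw [Finset.card_univ] at hle
    have h2 : ({v, w} : Finset V).card ≤ 2 := (Finset.card_insert_le _ _).trans (by simp)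
    omega
  have hlink := hconn.2 v (Set.mem_univ v) u (Set.mem_univ u)
  have hmem := key2 v u (Set.mem_insert _ _) hlink
  rcases hmem with rfl | hmem
  · exact huv rfl
  · exact huw (by simpa using hmem)
end

section
/- Let T be a spanning tree of a connected multigraph G, e ∈ E(T), and e' a non-tree edge covering e in T; let T' = (T\e) ∪ e'. Let f be an edge of T with f ≠ e, and suppose a non-tree edge f' ≠ e' covers f in T. Then f' covers f in T', unless f lies on the path P in T between the endpoints of e'. Moreover, every edge of (P \ e) ∪ e' is covered by e in T'. -/
namespace Multigraph

variable {V E : Type} {G : Multigraph V E}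


lemma ends_exists (e : E) : ∃ x y, G.ends e = s(x, y) := by
  obtain ⟨⟨x, y⟩, h⟩ := Quot.exists_rep (G.ends e)
  exact ⟨x, y, h.symm⟩

lemma step_symm {ES : Set E} {x y : V} (h : G.Step ES x y) : G.Step ES y x := by
  obtain ⟨f, hf, hfe⟩ := h
  exact ⟨f, hf, by rw [hfe, Sym2.eq_swap]⟩

lemma linkedOn_symm {ES : Set E} {x y : V} (h : G.LinkedOn ES x y) : G.LinkedOn ES y x := by
  induction h with
  | refl => exact .refl
  | tail _ hstep ih => exact Relation.ReflTransGen.head (step_symm hstep) ih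

lemma linkedOn_mono {ES ES' : Set E} (hsub : ES ⊆ ES') {x y : V} (h : G.LinkedOn ES x y) :
    G.LinkedOn ES' x y :=
  Relation.ReflTransGen.mono (fun _ _ ⟨f, hf, he⟩ => ⟨f, hsub hf, he⟩) _ _ h

lemma mem_of_linked {ES : Set E} {S : Set V}
    (hstep : ∀ u v, G.Step ES u v → u ∈ S → v ∈ S)
    {x y : V} (h : G.LinkedOn ES x y) (hx : x ∈ S) : y ∈ S := by
  induction h with
  | refl => exact hx
  | tail _ hs ih => exact hstep _ _ hs ih

/-- If the endpoints of `f` stay linked after deleting `f`, any walk can avoid `f`. -/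
lemma linked_avoid {ES : Set E} {f : E} {u v : V} (huv : G.ends f = s(u, v))
    (hlink : G.LinkedOn (ES \ {f}) u v) {x y : V} (h : G.LinkedOn ES x y) :
    G.LinkedOn (ES \ {f}) x y := by
  induction h with
  | refl => exact .refl
  | tail _ hs ih =>
    obtain ⟨g, hg, hge⟩ := hs
    by_cases hgf : g = f
    · subst hgf
      rw [huv] at hge
      rcases Sym2.eq_iff.mp hge with ⟨hu, hv⟩ | ⟨hu, hv⟩
      · exact ih.trans (by rw [← hu, ← hv]; exact hlink)
      · exact ih.trans (by rw [← hu, ← hv]; exact linkedOn_symm hlink)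
    · exact ih.tail ⟨g, ⟨hg, hgf⟩, hge⟩

lemma tree_edge_separates {T : Set E} (hT : G.IsSpanningTreeOn Set.univ Set.univ T)
    {f : E} (hf : f ∈ T) {u v : V} (huv : G.ends f = s(u, v)) :
    ¬ G.LinkedOn (T \ {f}) u v := by
  intro hlink
  exact hT.2.2 f hf ⟨fun _ _ _ _ => trivial, fun x _ y _ =>
    linked_avoid huv hlink (hT.2.1.2 x trivial y trivial)⟩

lemma two_components_aux {ES : Set E} {f : E} {u v : V} (huv : G.ends f = s(u, v))
    {w : V} (hw : G.LinkedOn ES u w) :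
    G.LinkedOn (ES \ {f}) u w ∨ G.LinkedOn (ES \ {f}) v w := by
  induction hw with
  | refl => exact Or.inl .refl
  | tail _ hs ih =>
    obtain ⟨g, hg, hge⟩ := hs
    by_cases hgf : g = f
    · subst hgf
      rw [huv] at hge
      rcases Sym2.eq_iff.mp hge with ⟨hu, hv⟩ | ⟨hu, hv⟩
      · exact Or.inr (by rw [hv]; exact .refl)
      · exact Or.inl (by rw [hu]; exact .refl)
    · rcases ih with h | h
      · exact Or.inl (h.tail ⟨g, ⟨hg, hgf⟩, hge⟩)
      · exact Or.inr (h.tail ⟨g, ⟨hg, hgf⟩, hge⟩)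

lemma two_components' {T : Set E} (hT : G.IsSpanningTreeOn Set.univ Set.univ T)
    {f : E} {a b : V} (hab : ¬ G.LinkedOn (T \ {f}) a b) (w : V) :
    G.LinkedOn (T \ {f}) a w ∨ G.LinkedOn (T \ {f}) b w := by
  obtain ⟨u, v, huv⟩ := ends_exists (G := G) f
  have hA : ∀ z, G.LinkedOn (T \ {f}) u z ∨ G.LinkedOn (T \ {f}) v z := fun z =>
    two_components_aux huv (hT.2.1.2 u trivial z trivial)
  rcases hA a with hau | hav <;> rcases hA b with hbu | hbv
  · exact absurd ((linkedOn_symm hau).trans hbu) hab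
  · rcases hA w with h | h
    · exact Or.inl ((linkedOn_symm hau).trans h)
    · exact Or.inr ((linkedOn_symm hbv).trans h)
  · rcases hA w with h | h
    · exact Or.inr ((linkedOn_symm hbu).trans h)
    · exact Or.inl ((linkedOn_symm hav).trans h)
  · exact absurd ((linkedOn_symm hav).trans hbv) hab

end Multigraph

/-- The swap operation maintains the cover invariant. Let `T` be a spanning
tree of a connected multigraph `G`, `e ∈ E(T)`, `e'` a non-tree edge covering
`e` in `T`, and `T' = (T \ e) ∪ e'`. If a non-tree edge `f' ≠ e'` covers an
edge `f ≠ e` of `T` in `T`, then `f'` covers `f` in `T'`, unless `f` lies on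
the path `P` in `T` between the endpoints of `e'` (i.e. unless `e'` covers `f`
in `T`). Moreover, every edge of `(P \ e) ∪ e'` is covered by `e` in `T'`. -/
theorem swap_maintains_cover_invariant {V E : Type} (G : Multigraph V E)
    (hconn : G.ConnectedOn Set.univ Set.univ)
    (T : Set E) (hT : G.IsSpanningTreeOn Set.univ Set.univ T)
    (e e' : E) (hcov : G.Covers T e' e) :
    (∀ f f' : E, f ≠ e → f' ≠ e' → G.Covers T f' f → ¬ G.Covers T e' f →
      G.Covers ((T \ {e}) ∪ {e'}) f' f) ∧
    (∀ g : E, g ≠ e → G.Covers T e' g → G.Covers ((T \ {e}) ∪ {e'}) e g) ∧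
    G.Covers ((T \ {e}) ∪ {e'}) e e' := by
  obtain ⟨heT, he'T, a, b, hab, hnab⟩ := hcov
  have hee' : e ≠ e' := fun h => he'T (h ▸ heT)
  refine ⟨?_, ?_, ?_⟩
  · -- Part 1
    intro f f' hfe hf'e' hc hnc
    obtain ⟨hfT, hf'T, c, d, hcd, hncd⟩ := hc
    have habf : G.LinkedOn (T \ {f}) a b := by
      by_contra hcon
      exact hnc ⟨hfT, he'T, a, b, hab, hcon⟩
    refine ⟨Or.inl ⟨hfT, hfe⟩, ?_, c, d, hcd, ?_⟩
    · rintro (⟨hf'T', -⟩ | rfl)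
      · exact hf'T hf'T'
      · exact hf'e' rfl
    · intro hlink
      have hstep : ∀ u v, G.Step (((T \ {e}) ∪ {e'}) \ {f}) u v →
          u ∈ {w | G.LinkedOn (T \ {f}) c w} → v ∈ {w | G.LinkedOn (T \ {f}) c w} := by
        rintro u v ⟨h, ⟨(⟨hhT, -⟩ | rfl), hhf⟩, hends⟩ hu
        · exact hu.tail ⟨h, ⟨hhT, hhf⟩, hends⟩
        · rcases Sym2.eq_iff.mp (hab.symm.trans hends) with ⟨h1, h2⟩ | ⟨h1, h2⟩
          · show G.LinkedOn (T \ {f}) c v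
            rw [← h2]
            exact Relation.ReflTransGen.trans (by rw [h1]; exact hu) habf
          · show G.LinkedOn (T \ {f}) c v
            rw [← h1]
            exact Relation.ReflTransGen.trans (by rw [h2]; exact hu)
              (Multigraph.linkedOn_symm habf)
      exact hncd (Multigraph.mem_of_linked hstep hlink Relation.ReflTransGen.refl)
  · -- Part 2
    intro g hgne hg
    obtain ⟨hgT, -, a', b', hab', hnab'⟩ := hg
    have hnabg : ¬ G.LinkedOn (T \ {g}) a b := by
      rw [hab] at hab'
      rcases Sym2.eq_iff.mp hab' with ⟨h1, h2⟩ | ⟨h1, h2⟩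
      · rwa [h1, h2]
      · rw [h1, h2]
        exact fun hl => hnab' (Multigraph.linkedOn_symm hl)
    obtain ⟨x, y, hxy⟩ := Multigraph.ends_exists (G := G) e
    refine ⟨Or.inl ⟨hgT, hgne⟩, ?_, x, y, hxy, ?_⟩
    · rintro (⟨-, hne⟩ | rfl)
      · exact hne rfl
      · exact hee' rfl
    · intro hlink
      set S : Set V := {w | (G.LinkedOn (T \ {e}) a w ∧ G.LinkedOn (T \ {g}) a w) ∨
          (G.LinkedOn (T \ {e}) b w ∧ G.LinkedOn (T \ {g}) b w)} with hSdef
      have haS : a ∈ S := Or.inl ⟨.refl, .refl⟩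
      have hbS : b ∈ S := Or.inr ⟨.refl, .refl⟩
      have hstep : ∀ u v, G.Step (((T \ {e}) ∪ {e'}) \ {g}) u v → u ∈ S → v ∈ S := by
        rintro u v ⟨h, ⟨(⟨hhT, hhe⟩ | rfl), hhg⟩, hends⟩ hu
        · have hse : G.Step (T \ {e}) u v := ⟨h, ⟨hhT, hhe⟩, hends⟩
          have hsg : G.Step (T \ {g}) u v := ⟨h, ⟨hhT, hhg⟩, hends⟩
          rcases hu with ⟨h1, h2⟩ | ⟨h1, h2⟩
          · exact Or.inl ⟨h1.tail hse, h2.tail hsg⟩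
          · exact Or.inr ⟨h1.tail hse, h2.tail hsg⟩
        · rcases Sym2.eq_iff.mp (hab.symm.trans hends) with ⟨h1, h2⟩ | ⟨h1, h2⟩
          · exact h2 ▸ hbS
          · exact h1 ▸ haS
      have hnxy_e : ¬ G.LinkedOn (T \ {e}) x y := Multigraph.tree_edge_separates hT heT hxy
      have hxy_g : G.LinkedOn (T \ {g}) x y :=
        Relation.ReflTransGen.single ⟨e, ⟨heT, fun h => hgne h.symm⟩, hxy⟩
      have exE := Multigraph.two_components' hT hnab
      have exG := Multigraph.two_components' hT hnabg
      rcases exE x with h1 | h1 <;> rcases exG x with h2 | h2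
      · -- Le a x, Lg a x : x ∈ S
        rcases Multigraph.mem_of_linked hstep hlink (Or.inl ⟨h1, h2⟩) with ⟨k1, k2⟩ | ⟨k1, k2⟩
        · exact hnxy_e ((Multigraph.linkedOn_symm h1).trans k1)
        · exact hnabg ((h2.trans hxy_g).trans (Multigraph.linkedOn_symm k2))
      · -- Le a x, Lg b x
        have hye : G.LinkedOn (T \ {e}) b y := by
          rcases exE y with h | h
          · exact absurd ((Multigraph.linkedOn_symm h1).trans h) hnxy_e
          · exact h
        have hyg : G.LinkedOn (T \ {g}) b y := h2.trans hxy_g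
        rcases Multigraph.mem_of_linked hstep (Multigraph.linkedOn_symm hlink)
            (Or.inr ⟨hye, hyg⟩) with ⟨k1, k2⟩ | ⟨k1, k2⟩
        · exact hnabg (k2.trans (Multigraph.linkedOn_symm h2))
        · exact hnab (h1.trans (Multigraph.linkedOn_symm k1))
      · -- Le b x, Lg a x
        have hye : G.LinkedOn (T \ {e}) a y := by
          rcases exE y with h | h
          · exact h
          · exact absurd ((Multigraph.linkedOn_symm h1).trans h) hnxy_e
        have hyg : G.LinkedOn (T \ {g}) a y := h2.trans hxy_g
        rcases Multigraph.mem_of_linked hstep (Multigraph.linkedOn_symm hlink)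
            (Or.inl ⟨hye, hyg⟩) with ⟨k1, k2⟩ | ⟨k1, k2⟩
        · exact hnab (k1.trans (Multigraph.linkedOn_symm h1))
        · exact hnabg (h2.trans (Multigraph.linkedOn_symm k2))
      · -- Le b x, Lg b x : x ∈ S
        rcases Multigraph.mem_of_linked hstep hlink (Or.inr ⟨h1, h2⟩) with ⟨k1, k2⟩ | ⟨k1, k2⟩
        · exact hnabg (k2.trans (Multigraph.linkedOn_symm (h2.trans hxy_g)))
        · exact hnxy_e ((Multigraph.linkedOn_symm h1).trans k1)
  · -- Part 3
    have sub3 : ((T \ {e}) ∪ {e'}) \ {e'} ⊆ T \ {e} := by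
      rintro h ⟨(hh | rfl), hne⟩
      · exact hh
      · exact absurd rfl hne
    refine ⟨Or.inr rfl, ?_, ?_⟩
    · rintro (⟨-, hne⟩ | rfl)
      · exact hne rfl
      · exact hee' rfl
    · obtain ⟨x, y, hxy⟩ := Multigraph.ends_exists (G := G) e
      exact ⟨x, y, hxy, fun hl =>
        Multigraph.tree_edge_separates hT heT hxy (Multigraph.linkedOn_mono sub3 hl)⟩
end
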